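/- arXiv:2101.04968 — 4 statements merged into one kernel-verified Lean document; each statement's English description precedes it below -/
import Mathlib

section
/- Let R : ℝ^p → ℝ be twice continuously differentiable with β-Lipschitz gradient, and suppose R is ε-weakly convex, i.e., ∇²R(ω) ⪰ -εI for all ω. Then for any x, y ∈ ℝ^p and step size η ≥ 0 with ηβ ≤ 3/2 and 2ηε < 1, the gradient update is expansive by at most a factor 1/√(1-2ηε): ‖x - y - η(∇R(x) - ∇R(y))‖ ≤ (1/√(1-2ηε)) ‖x - y‖. -/
open scoped RealInnerProductSpace

/-- Expansiveness bound for the gradient update under ε-weak convexity. -/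
theorem weakly_convex_gradient_update_expansiveness
    {p : ℕ} (R : EuclideanSpace ℝ (Fin p) → ℝ) (β ε η : ℝ)
    (hR : ContDiff ℝ 2 R)
    (hLip : ∀ x y : EuclideanSpace ℝ (Fin p),
      ‖gradient R x - gradient R y‖ ≤ β * ‖x - y‖)
    (hwc : ∀ ω u : EuclideanSpace ℝ (Fin p),
      ⟪u, fderiv ℝ (gradient R) ω u⟫ ≥ -ε * ‖u‖ ^ 2)
    (hη : 0 ≤ η) (hηβ : η * β ≤ 3 / 2) (hηε : 2 * η * ε < 1)
    (x y : EuclideanSpace ℝ (Fin p)) :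
    ‖x - y - η • (gradient R x - gradient R y)‖ ≤
      (1 / Real.sqrt (1 - 2 * η * ε)) * ‖x - y‖ := by
  classical
  set c : ℝ := 1 / Real.sqrt (1 - 2 * η * ε) with hc
  have hpos : (0:ℝ) < 1 - 2 * η * ε := by linarith
  have hc0 : 0 ≤ c := by positivity
  have hc2 : c ^ 2 = 1 / (1 - 2 * η * ε) := by
    rw [hc, div_pow, one_pow, Real.sq_sqrt hpos.le]
  set β' : ℝ := max β 0 with hβ'
  have hβ'0 : 0 ≤ β' := le_max_right _ _
  have hLip' : LipschitzWith ⟨β', hβ'0⟩ (gradient R) := by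
    apply LipschitzWith.of_dist_le_mul
    intro a b
    rw [dist_eq_norm, dist_eq_norm]
    calc ‖gradient R a - gradient R b‖ ≤ β * ‖a - b‖ := hLip a b
      _ ≤ β' * ‖a - b‖ :=
        mul_le_mul_of_nonneg_right (le_max_left _ _) (norm_nonneg _)
  have hf1 : ContDiff ℝ 1 (fderiv ℝ R) := hR.fderiv_right (by norm_num)
  have hfd : Differentiable ℝ (fderiv ℝ R) := hf1.differentiable one_ne_zero
  let e : StrongDual ℝ (EuclideanSpace ℝ (Fin p)) →L[ℝ] EuclideanSpace ℝ (Fin p) :=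
    { toFun := fun ℓ => (InnerProductSpace.toDual ℝ (EuclideanSpace ℝ (Fin p))).symm ℓ
      map_add' := fun a b => map_add _ a b
      map_smul' := fun a ℓ => by
        simpa using
          (InnerProductSpace.toDual ℝ (EuclideanSpace ℝ (Fin p))).symm.map_smulₛₗ a ℓ
      cont := (InnerProductSpace.toDual ℝ (EuclideanSpace ℝ (Fin p))).symm.continuous }
  have hecoe : ∀ ℓ, e ℓ = (InnerProductSpace.toDual ℝ (EuclideanSpace ℝ (Fin p))).symm ℓ :=
    fun ℓ => rfl
  have hgrad : ∀ ω : EuclideanSpace ℝ (Fin p), HasFDerivAt (gradient R)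
      (e.comp (fderiv ℝ (fderiv ℝ R) ω)) ω := by
    intro ω
    exact (e.hasFDerivAt).comp ω (hfd ω).hasFDerivAt
  have hsymm : ∀ ω (u v : EuclideanSpace ℝ (Fin p)),
      ⟪fderiv ℝ (gradient R) ω u, v⟫ = ⟪u, fderiv ℝ (gradient R) ω v⟫ := by
    intro ω u v
    have h2 : ∀ w z, fderiv ℝ (fderiv ℝ R) ω w z = fderiv ℝ (fderiv ℝ R) ω z w :=
      second_derivative_symmetric
        (fun z => (hR.differentiable (by norm_num) z).hasFDerivAt)
        (hfd ω).hasFDerivAt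
    rw [(hgrad ω).fderiv]
    simp only [ContinuousLinearMap.coe_comp', Function.comp_apply, hecoe]
    rw [InnerProductSpace.toDual_symm_apply, real_inner_comm,
      InnerProductSpace.toDual_symm_apply]
    exact h2 u v
  have hop : ∀ (ω u : EuclideanSpace ℝ (Fin p)),
      ‖u - η • fderiv ℝ (gradient R) ω u‖ ≤ c * ‖u‖ := by
    intro ω u
    set H := fderiv ℝ (gradient R) ω with hH
    have hT : (H : EuclideanSpace ℝ (Fin p) →ₗ[ℝ]
        EuclideanSpace ℝ (Fin p)).IsSymmetric := fun a b => hsymm ω a b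
    have hn : Module.finrank ℝ (EuclideanSpace ℝ (Fin p)) = p :=
      finrank_euclideanSpace_fin
    set b := hT.eigenvectorBasis hn with hbdef
    set μ := hT.eigenvalues hn with hμdef
    have hHnorm : ‖H‖ ≤ β' := norm_fderiv_le_of_lipschitz ℝ hLip'
    have hμ : ∀ i, -ε ≤ μ i ∧ μ i ≤ β' := by
      intro i
      have hb1 : ‖b i‖ = 1 := (hT.eigenvectorBasis hn).orthonormal.1 i
      have happ : H (b i) = μ i • b i := hT.apply_eigenvectorBasis hn i
      have hinner : ⟪b i, H (b i)⟫ = μ i := by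
        rw [happ, real_inner_smul_right, real_inner_self_eq_norm_sq, hb1]
        ring
      constructor
      · have h := hwc ω (b i)
        rw [← hH] at h
        rw [hinner] at h
        rw [hb1] at h
        linarith [h]
      · have h1 : ‖H (b i)‖ ≤ β' := by
          calc ‖H (b i)‖ ≤ ‖H‖ * ‖b i‖ := H.le_opNorm _
            _ ≤ β' := by rw [hb1, mul_one]; exact hHnorm
        rw [happ, norm_smul, hb1, mul_one] at h1
        exact le_trans (le_abs_self _) h1
    have hnorm : ∀ v : EuclideanSpace ℝ (Fin p),
        ‖v‖ ^ 2 = ∑ i, (b.repr v i) ^ 2 := by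
      intro v
      rw [← b.repr.norm_map v, EuclideanSpace.norm_eq,
        Real.sq_sqrt (by positivity)]
      simp [sq_abs]
    have hcomp : ∀ i, b.repr (u - η • H u) i = (1 - η * μ i) * b.repr u i := by
      intro i
      have hrep : b.repr (H u) i = μ i * b.repr u i :=
        hT.eigenvectorBasis_apply_self_apply hn u i
      rw [map_sub, map_smul]
      simp only [PiLp.sub_apply, PiLp.smul_apply, smul_eq_mul]
      rw [hrep]
      ring
    have hkey : ‖u - η • H u‖ ^ 2 ≤ (c * ‖u‖) ^ 2 := by
      rw [mul_pow, hnorm, hnorm, Finset.mul_sum]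
      apply Finset.sum_le_sum
      intro i _
      rw [hcomp i, mul_pow]
      have h1 : -ε ≤ μ i := (hμ i).1
      have h2 : μ i ≤ β' := (hμ i).2
      have h3 : η * μ i ≤ 3 / 2 := by
        have : η * μ i ≤ η * β' := mul_le_mul_of_nonneg_left h2 hη
        have hββ : η * β' ≤ 3 / 2 := by
          rw [hβ', mul_max_of_nonneg _ _ hη]
          exact max_le hηβ (by norm_num)
        linarith
      have h4 : -(η * ε) ≤ η * μ i := by nlinarith
      have hfac : (1 - η * μ i) ^ 2 ≤ c ^ 2 := by
        rw [hc2, le_div_iff₀ hpos]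
        nlinarith [mul_nonneg (sq_nonneg (1 - η * μ i))
            (show (0:ℝ) ≤ 2 * (η * μ i) + 2 * (η * ε) by linarith),
          mul_nonneg (sq_nonneg (η * μ i))
            (show (0:ℝ) ≤ 3 - 2 * (η * μ i) by linarith)]
      exact mul_le_mul_of_nonneg_right hfac (sq_nonneg _)
    have h5 : 0 ≤ c * ‖u‖ := mul_nonneg hc0 (norm_nonneg _)
    nlinarith [norm_nonneg (u - η • H u)]
  have hgdiff : Differentiable ℝ (gradient R) := fun z => (hgrad z).differentiableAt
  have hFd : ∀ z : EuclideanSpace ℝ (Fin p),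
      HasFDerivAt (fun w : EuclideanSpace ℝ (Fin p) => w - η • gradient R w)
        (ContinuousLinearMap.id ℝ (EuclideanSpace ℝ (Fin p))
          - η • fderiv ℝ (gradient R) z) z := by
    intro z
    exact (hasFDerivAt_id z).sub (((hgdiff z).hasFDerivAt).const_smul η)
  have hbound : ∀ z : EuclideanSpace ℝ (Fin p),
      ‖fderiv ℝ (fun w : EuclideanSpace ℝ (Fin p) => w - η • gradient R w) z‖ ≤ c := by
    intro z
    rw [(hFd z).fderiv]
    refine ContinuousLinearMap.opNorm_le_bound _ hc0 (fun u => ?_)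
    simpa using hop z u
  have hmv := Convex.norm_image_sub_le_of_norm_fderiv_le
      (fun z _ => (hFd z).differentiableAt)
      (fun z _ => hbound z) convex_univ (Set.mem_univ y) (Set.mem_univ x)
  calc ‖x - y - η • (gradient R x - gradient R y)‖
      = ‖(x - η • gradient R x) - (y - η • gradient R y)‖ := by
        rw [smul_sub]; congr 1; abel
    _ ≤ c * ‖x - y‖ := hmv
end

section
/- Let R : ℝ^p → ℝ be C² with β-Lipschitz gradient and ε-weakly convex (∇²R ⪰ -εI everywhere). Then for any η ≥ 0 and x, y ∈ ℝ^p: ⟨∇R(x) - ∇R(y), x - y⟩ ≥ 2η(1 - βη/2)‖∇R(x) - ∇R(y)‖² - ε‖x - y - η(∇R(x) - ∇R(y))‖². -/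
set_option maxHeartbeats 1600000 in
lemma key_arith (t W b L ε η : ℝ) (hW : 0 ≤ W) (hb : 0 ≤ b) (hL : 0 ≤ L)
    (hη : 0 ≤ η) (h1 : W ≤ L * t) (h2 : t ^ 2 ≤ W * b) :
    0 ≤ (1 + 2*ε*η - 2*ε*L*η^2) * t - (2*η - L*η^2) * W + ε^2*L*η^2*b := by
  have ht : 0 ≤ t := by
    by_contra h
    push_neg at h
    have h3 : L * t ≤ 0 := mul_nonpos_of_nonneg_of_nonpos hL h.le
    have hW0 : W = 0 := le_antisymm (h1.trans h3) hW
    rw [hW0] at h2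
    nlinarith
  have htLb : t ≤ L * b := by
    rcases ht.eq_or_lt with h | h
    · rw [← h]; exact mul_nonneg hL hb
    · have h3 : t ^ 2 ≤ (L * t) * b := h2.trans (mul_le_mul_of_nonneg_right h1 hb)
      nlinarith
  have hε2 : 0 ≤ ε^2*L*η^2*b :=
    mul_nonneg (mul_nonneg (mul_nonneg (sq_nonneg ε) hL) (sq_nonneg η)) hb
  rcases hb.eq_or_lt with hb0 | hb'
  · -- b = 0 : then t = 0, W = 0
    have ht0 : t = 0 := le_antisymm (by rw [← hb0] at htLb; simpa using htLb) ht
    have hW0 : W = 0 := le_antisymm (by rw [ht0] at h1; simpa using h1) hW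
    rw [ht0, hW0, ← hb0]
    simp
  rcases le_or_gt 0 (2*η - L*η^2) with hc | hc
  · -- c ≥ 0
    have hLtW : 0 ≤ (2*η - L*η^2) * (L * t - W) := mul_nonneg hc (by linarith)
    rcases le_or_gt 0 ((1 + 2*ε*η - 2*ε*L*η^2) - (2*η - L*η^2) * L) with hd | hd
    · nlinarith [mul_nonneg hd ht]
    · have key : 0 ≤ L * b * (1 - (L - ε)*η)^2 :=
        mul_nonneg (mul_nonneg hL hb) (sq_nonneg _)
      nlinarith [mul_nonneg (le_of_lt (neg_pos.2 hd)) (sub_nonneg.2 htLb)]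
  · -- c < 0
    have hη' : 0 < η := by
      rcases hη.eq_or_lt with h | h
      · exfalso; rw [← h] at hc; simp at hc
      · exact h
    have hL' : 0 < L := by nlinarith
    rcases le_or_gt 0 (1 + 2*ε*η - 2*ε*L*η^2) with hα | hα
    · nlinarith [mul_nonneg hα ht, mul_nonneg (le_of_lt (neg_pos.2 hc)) hW]
    · -- α < 0, c < 0
      have hbT : ((L*η^2 - 2*η)) * t^2 + (1 + 2*ε*η - 2*ε*L*η^2) * b * t + ε^2*L*η^2*b^2
          ≤ b * ((1 + 2*ε*η - 2*ε*L*η^2) * t - (2*η - L*η^2) * W + ε^2*L*η^2*b) := by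
        nlinarith [mul_nonneg (le_of_lt (neg_pos.2 hc)) (sub_nonneg.2 h2)]
      have hf : 0 ≤ ((L*η^2 - 2*η)) * t^2 + (1 + 2*ε*η - 2*ε*L*η^2) * b * t + ε^2*L*η^2*b^2 := by
        rcases le_or_gt (2*(L*η^2 - 2*η)*L) (-(1 + 2*ε*η - 2*ε*L*η^2)) with hd | hd
        · -- min at t = Lb
          have key : 0 ≤ L * b^2 * (1 - (L - ε)*η)^2 :=
            mul_nonneg (mul_nonneg hL (sq_nonneg b)) (sq_nonneg _)
          have inner : 0 ≤ -((L*η^2 - 2*η)*(t + L*b) + (1 + 2*ε*η - 2*ε*L*η^2)*b) := by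
            nlinarith [mul_nonneg (sub_nonneg.2 htLb) (by linarith : (0:ℝ) ≤ L*η^2 - 2*η),
              mul_nonneg hb (by linarith : (0:ℝ) ≤ -(2*(L*η^2 - 2*η)*L + (1 + 2*ε*η - 2*ε*L*η^2)))]
          nlinarith [mul_nonneg (sub_nonneg.2 htLb) inner]
        · -- interior min: discriminant nonneg claim
          have hx : (0:ℝ) < 2*ε*L*η^2 - 2*ε*η - 1 := by linarith
          have hy : (0:ℝ) < 2*(L*η^2 - 2*η)*L - (2*ε*L*η^2 - 2*ε*η - 1) := by linarith
          have hqpos : (0:ℝ) < (L*η^2 - 2*η)*L := mul_pos (by linarith) hL'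
          have hq1 : (0:ℝ) < (L*η - 1)^2 := by nlinarith
          have hid : ((L*η - 1)^2) * (4*(L*η^2 - 2*η)*(ε^2*L*η^2) - (1 + 2*ε*η - 2*ε*L*η^2)^2)
              = (2*ε*L*η^2 - 2*ε*η - 1)*(2*(L*η^2 - 2*η)*L - (2*ε*L*η^2 - 2*ε*η - 1))
                + (L*η^2 - 2*η)*L := by ring
          have hq : 0 ≤ 4*(L*η^2 - 2*η)*(ε^2*L*η^2) - (1 + 2*ε*η - 2*ε*L*η^2)^2 := by
            by_contra hcon
            push_neg at hcon
            have h5 : ((L*η - 1)^2) * (4*(L*η^2 - 2*η)*(ε^2*L*η^2) - (1 + 2*ε*η - 2*ε*L*η^2)^2) ≤ 0 :=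
              mul_nonpos_of_nonneg_of_nonpos (sq_nonneg _) hcon.le
            rw [hid] at h5
            linarith [mul_pos hx hy, hqpos]
          nlinarith [sq_nonneg (2*(L*η^2 - 2*η)*t + (1 + 2*ε*η - 2*ε*L*η^2)*b),
            mul_nonneg hq (sq_nonneg b), (show (0:ℝ) < L*η^2 - 2*η by linarith)]
      by_contra hcon
      push_neg at hcon
      have : b * ((1 + 2*ε*η - 2*ε*L*η^2) * t - (2*η - L*η^2) * W + ε^2*L*η^2*b) < 0 :=
        mul_neg_of_pos_of_neg hb' hcon
      linarith

open scoped RealInnerProductSpace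

section Aux

variable {p : ℕ}

local notation "E" => EuclideanSpace ℝ (Fin p)

lemma wcc_line_hasDerivAt (v d : E) (τ : ℝ) :
    HasDerivAt (fun σ : ℝ => v + σ • d) d τ := by
  simpa using ((hasDerivAt_id τ).smul_const d).const_add v

lemma wcc_fderiv_apply (R : E → ℝ) (w u : E) :
    fderiv ℝ R w u = ⟪gradient R w, u⟫ := by
  rw [gradient, InnerProductSpace.toDual_symm_apply]

lemma wcc_grad_contDiff (R : E → ℝ) (hR : ContDiff ℝ 2 R) :
    ContDiff ℝ 1 (gradient R) := by
  have h : ContDiff ℝ 1 (fderiv ℝ R) := hR.fderiv_right (by norm_num)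
  exact ((InnerProductSpace.toDual ℝ E).symm.contDiff).comp h

lemma wcc_R_hasDerivAt (R : E → ℝ) (hdR : Differentiable ℝ R) (v d : E) (τ : ℝ) :
    HasDerivAt (fun σ : ℝ => R (v + σ • d)) ⟪gradient R (v + τ • d), d⟫ τ := by
  have h := (hdR (v + τ • d)).hasFDerivAt.comp_hasDerivAt τ (wcc_line_hasDerivAt v d τ)
  rwa [wcc_fderiv_apply] at h

lemma wcc_inner_hasDerivAt (G : E → E) (hG : Differentiable ℝ G) (v d u₀ : E) (τ : ℝ) :
    HasDerivAt (fun σ : ℝ => ⟪G (v + σ • d), u₀⟫) ⟪fderiv ℝ G (v + τ • d) d, u₀⟫ τ := by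
  have h1 : HasDerivAt (fun σ : ℝ => G (v + σ • d)) (fderiv ℝ G (v + τ • d) d) τ :=
    (hG (v + τ • d)).hasFDerivAt.comp_hasDerivAt τ (wcc_line_hasDerivAt v d τ)
  simpa using h1.inner ℝ (hasDerivAt_const τ u₀)

/-- weak monotonicity of the gradient -/
lemma wcc_mono (R : E → ℝ) (ε : ℝ) (hG : Differentiable ℝ (gradient R))
    (hwc : ∀ ω u : E, ⟪u, fderiv ℝ (gradient R) ω u⟫ ≥ -ε * ‖u‖ ^ 2) (u v : E) :
    -ε * ‖u - v‖ ^ 2 ≤ ⟪gradient R u - gradient R v, u - v⟫ := by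
  set d := u - v with hd
  obtain ⟨ξ, hξ, heq⟩ := exists_hasDerivAt_eq_slope
    (fun σ : ℝ => ⟪gradient R (v + σ • d), d⟫)
    (fun τ : ℝ => ⟪fderiv ℝ (gradient R) (v + τ • d) d, d⟫) one_pos
    (fun τ _ => (wcc_inner_hasDerivAt (gradient R) hG v d d τ).continuousAt.continuousWithinAt)
    (fun τ _ => wcc_inner_hasDerivAt (gradient R) hG v d d τ)
  have hv1 : v + (1:ℝ) • d = u := by rw [one_smul, hd]; abel
  have hv0 : v + (0:ℝ) • d = v := by rw [zero_smul, add_zero]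
  rw [hv1, hv0] at heq
  have hlow : -ε * ‖d‖ ^ 2 ≤ ⟪fderiv ℝ (gradient R) (v + ξ • d) d, d⟫ := by
    have := hwc (v + ξ • d) d
    rwa [real_inner_comm] at this
  rw [heq] at hlow
  have : ⟪gradient R u, d⟫ - ⟪gradient R v, d⟫ = ⟪gradient R u - gradient R v, d⟫ :=
    (inner_sub_left _ _ _).symm
  rw [show ((1:ℝ) - 0) = 1 by norm_num, div_one] at hlow
  linarith [hlow, this.symm.le, this.le]

/-- descent lemma -/
lemma wcc_descent (R : E → ℝ) (β : ℝ) (hdR : Differentiable ℝ R)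
    (hLip : ∀ x y : E, ‖gradient R x - gradient R y‖ ≤ β * ‖x - y‖) (u v : E) :
    R u ≤ R v + ⟪gradient R v, u - v⟫ + β / 2 * ‖u - v‖ ^ 2 := by
  set d := u - v with hd
  set B := ⟪gradient R v, d⟫ with hB
  set C := β / 2 * ‖d‖ ^ 2 with hC
  have hψ : ∀ τ : ℝ, HasDerivAt (fun σ : ℝ => R (v + σ • d) - σ * B - σ ^ 2 * C)
      (⟪gradient R (v + τ • d), d⟫ - B - 2 * τ * C) τ := by
    intro τ
    have h1 := wcc_R_hasDerivAt R hdR v d τ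
    have h2 : HasDerivAt (fun σ : ℝ => σ * B) B τ := by
      simpa using (hasDerivAt_id τ).mul_const B
    have h3 : HasDerivAt (fun σ : ℝ => σ ^ 2 * C) (2 * τ * C) τ := by
      have := (hasDerivAt_pow 2 τ).mul_const C
      simpa [pow_one] using this.congr_deriv (by ring)
    exact (h1.sub h2).sub h3
  obtain ⟨ξ, hξ, heq⟩ := exists_hasDerivAt_eq_slope _ _ one_pos
    (fun τ _ => (hψ τ).continuousAt.continuousWithinAt) (fun τ hτ => hψ τ)
  have hder : ⟪gradient R (v + ξ • d), d⟫ - B - 2 * ξ * C ≤ 0 := by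
    have hlip := hLip (v + ξ • d) v
    have hsub : (v + ξ • d) - v = ξ • d := add_sub_cancel_left v _
    rw [hsub, norm_smul, Real.norm_eq_abs, abs_of_pos hξ.1] at hlip
    have hcs := real_inner_le_norm (gradient R (v + ξ • d) - gradient R v) d
    have hisub : ⟪gradient R (v + ξ • d) - gradient R v, d⟫
        = ⟪gradient R (v + ξ • d), d⟫ - B := inner_sub_left _ _ _
    have h4 : ‖gradient R (v + ξ • d) - gradient R v‖ * ‖d‖ ≤ β * (ξ * ‖d‖) * ‖d‖ :=
      mul_le_mul_of_nonneg_right hlip (norm_nonneg d)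
    rw [hC]
    nlinarith [hcs, hisub]
  rw [heq] at hder
  have hv1 : v + (1:ℝ) • d = u := by rw [one_smul, hd]; abel
  have hv0 : v + (0:ℝ) • d = v := by rw [zero_smul, add_zero]
  rw [show ((1:ℝ) - 0) = 1 by norm_num, div_one, hv1, hv0] at hder
  have : R u - 1 * B - 1 ^ 2 * C - (R v - 0 * B - 0 ^ 2 * C) ≤ 0 := by simpa using hder
  rw [hB, hC] at this
  linarith

/-- convexity-type lower bound -/
lemma wcc_conv (R : E → ℝ) (ε : ℝ) (hdR : Differentiable ℝ R)
    (hG : Differentiable ℝ (gradient R))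
    (hwc : ∀ ω u : E, ⟪u, fderiv ℝ (gradient R) ω u⟫ ≥ -ε * ‖u‖ ^ 2) (u v : E) :
    R v + ⟪gradient R v, u - v⟫ - ε / 2 * ‖u - v‖ ^ 2 ≤ R u := by
  set d := u - v with hd
  set B := ⟪gradient R v, d⟫ with hB
  set C := ε / 2 * ‖d‖ ^ 2 with hC
  have hψ : ∀ τ : ℝ, HasDerivAt (fun σ : ℝ => R (v + σ • d) - σ * B + σ ^ 2 * C)
      (⟪gradient R (v + τ • d), d⟫ - B + 2 * τ * C) τ := by
    intro τ
    have h1 := wcc_R_hasDerivAt R hdR v d τ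
    have h2 : HasDerivAt (fun σ : ℝ => σ * B) B τ := by
      simpa using (hasDerivAt_id τ).mul_const B
    have h3 : HasDerivAt (fun σ : ℝ => σ ^ 2 * C) (2 * τ * C) τ := by
      have := (hasDerivAt_pow 2 τ).mul_const C
      simpa [pow_one] using this.congr_deriv (by ring)
    exact (h1.sub h2).add h3
  obtain ⟨ξ, hξ, heq⟩ := exists_hasDerivAt_eq_slope _ _ one_pos
    (fun τ _ => (hψ τ).continuousAt.continuousWithinAt) (fun τ hτ => hψ τ)
  have hder : 0 ≤ ⟪gradient R (v + ξ • d), d⟫ - B + 2 * ξ * C := by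
    have hmono := wcc_mono R ε hG hwc (v + ξ • d) v
    have hsub : (v + ξ • d) - v = ξ • d := add_sub_cancel_left v _
    rw [hsub] at hmono
    have hisub : ⟪gradient R (v + ξ • d) - gradient R v, ξ • d⟫
        = ξ * (⟪gradient R (v + ξ • d), d⟫ - B) := by
      rw [real_inner_smul_right, inner_sub_left, hB]
    rw [hisub, norm_smul, Real.norm_eq_abs, abs_of_pos hξ.1] at hmono
    -- hmono : -ε * (ξ * ‖d‖)^2 ≤ ξ * (inner - B)
    have hξpos := hξ.1
    have h5 : ξ * (-ε * (ξ * ‖d‖) * ‖d‖) ≤ ξ * (⟪gradient R (v + ξ • d), d⟫ - B) := by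
      calc ξ * (-ε * (ξ * ‖d‖) * ‖d‖) = -ε * (ξ * ‖d‖) ^ 2 := by ring
      _ ≤ _ := hmono
    have h6 := (mul_le_mul_iff_right₀ hξpos).mp h5
    rw [hC]
    nlinarith [h6]
  rw [heq] at hder
  have hv1 : v + (1:ℝ) • d = u := by rw [one_smul, hd]; abel
  have hv0 : v + (0:ℝ) • d = v := by rw [zero_smul, add_zero]
  rw [show ((1:ℝ) - 0) = 1 by norm_num, div_one, hv1, hv0] at hder
  have h7 : 0 ≤ R u - 1 * B - (R v - 0 * B + 0 ^ 2 * C) + 1 ^ 2 * C := by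
    nlinarith [hder]
  rw [hB, hC] at h7
  linarith

/-- the co-coercivity family inequality -/
lemma wcc_family (R : E → ℝ) (β ε : ℝ) (hdR : Differentiable ℝ R)
    (hG : Differentiable ℝ (gradient R))
    (hLip : ∀ x y : E, ‖gradient R x - gradient R y‖ ≤ β * ‖x - y‖)
    (hwc : ∀ ω u : E, ⟪u, fderiv ℝ (gradient R) ω u⟫ ≥ -ε * ‖u‖ ^ 2)
    (x y : E) (θ : ℝ) :
    (2 * θ - (β + ε) * θ ^ 2) * ‖gradient R x - gradient R y + ε • (x - y)‖ ^ 2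
      - ε * ‖x - y‖ ^ 2 ≤ ⟪gradient R x - gradient R y, x - y⟫ := by
  set w : E := gradient R x - gradient R y + ε • (x - y) with hwdef
  have h1 := wcc_conv R ε hdR hG hwc (y + θ • w) x
  have h2 := wcc_descent R β hdR hLip (y + θ • w) y
  have h3 := wcc_conv R ε hdR hG hwc (x - θ • w) y
  have h4 := wcc_descent R β hdR hLip (x - θ • w) x
  have v1 : (y + θ • w) - x = (y - x) + θ • w := by abel
  have v2 : (y + θ • w) - y = θ • w := by abel
  have v3 : (x - θ • w) - y = (x - y) - θ • w := by abel
  have v4 : (x - θ • w) - x = -(θ • w) := by abel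
  rw [v1] at h1
  rw [v2] at h2
  rw [v3] at h3
  rw [v4] at h4
  have hw : ⟪gradient R x - gradient R y + ε • (x - y), w⟫ = ‖w‖ ^ 2 := by
    rw [← hwdef]; exact real_inner_self_eq_norm_sq w
  have hw2 : 2 * θ * ⟪gradient R x - gradient R y + ε • (x - y), w⟫ = 2 * θ * ‖w‖ ^ 2 := by
    rw [hw]
  simp only [inner_add_left, inner_add_right, inner_sub_left, inner_sub_right,
    inner_neg_left, inner_neg_right, real_inner_smul_left, real_inner_smul_right,
    norm_add_sq_real, norm_sub_sq_real, norm_smul, Real.norm_eq_abs, mul_pow, sq_abs,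
    norm_neg] at h1 h2 h3 h4 hw2 ⊢
  rw [real_inner_comm x y] at h1
  linarith [h1, h2, h3, h4, hw2]

end Aux

/-- Weakly convex analogue of co-coercivity of gradients. -/
theorem weakly_convex_cocoercivity
    {p : ℕ} (R : EuclideanSpace ℝ (Fin p) → ℝ) (β ε η : ℝ)
    (hR : ContDiff ℝ 2 R)
    (hLip : ∀ x y : EuclideanSpace ℝ (Fin p),
      ‖gradient R x - gradient R y‖ ≤ β * ‖x - y‖)
    (hwc : ∀ ω u : EuclideanSpace ℝ (Fin p),
      ⟪u, fderiv ℝ (gradient R) ω u⟫ ≥ -ε * ‖u‖ ^ 2)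
    (hη : 0 ≤ η)
    (x y : EuclideanSpace ℝ (Fin p)) :
    ⟪gradient R x - gradient R y, x - y⟫ ≥
      2 * η * (1 - β * η / 2) * ‖gradient R x - gradient R y‖ ^ 2
        - ε * ‖x - y - η • (gradient R x - gradient R y)‖ ^ 2 := by
  rcases Nat.eq_zero_or_pos p with hp | hp
  · subst hp
    have hxy : x = y := by ext i; exact Fin.elim0 i
    subst hxy
    simp
  have hdR : Differentiable ℝ R := hR.differentiable (by norm_num)
  have hGc : ContDiff ℝ 1 (gradient R) := wcc_grad_contDiff R hR
  have hG : Differentiable ℝ (gradient R) := hGc.differentiable one_ne_zero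
  -- β + ε ≥ 0
  have hL : 0 ≤ β + ε := by
    set u : EuclideanSpace ℝ (Fin p) := EuclideanSpace.single ⟨0, hp⟩ (1:ℝ) with hudef
    have hu : ‖u‖ = 1 := by rw [hudef, EuclideanSpace.norm_single]; norm_num
    have hm := wcc_mono R ε hG hwc u 0
    have hcs := real_inner_le_norm (gradient R u - gradient R 0) (u - 0)
    have hlip := hLip u 0
    rw [sub_zero] at hm hcs hlip
    have h5 := mul_le_mul_of_nonneg_right hlip (norm_nonneg u)
    rw [hu] at hm hcs h5
    nlinarith [hm, hcs, h5]
  have hfam := wcc_family R β ε hdR hG hLip hwc x y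
  set s : ℝ := ⟪gradient R x - gradient R y, x - y⟫ with hsdef
  -- ⟪w, x-y⟫ = s + ε b
  have et : ⟪gradient R x - gradient R y + ε • (x - y), x - y⟫ = s + ε * ‖x - y‖ ^ 2 := by
    rw [inner_add_left, real_inner_smul_left, real_inner_self_eq_norm_sq, hsdef]
  -- Cauchy-Schwarz
  have h2 : (s + ε * ‖x - y‖ ^ 2) ^ 2
      ≤ ‖gradient R x - gradient R y + ε • (x - y)‖ ^ 2 * ‖x - y‖ ^ 2 := by
    have hcs := real_inner_mul_inner_self_le (gradient R x - gradient R y + ε • (x - y)) (x - y)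
    rw [real_inner_self_eq_norm_sq, real_inner_self_eq_norm_sq, et] at hcs
    calc (s + ε * ‖x - y‖ ^ 2) ^ 2 = (s + ε * ‖x - y‖ ^ 2) * (s + ε * ‖x - y‖ ^ 2) := sq _
    _ ≤ _ := hcs
  -- the key constraint W ≤ L t
  have hW1 : ‖gradient R x - gradient R y + ε • (x - y)‖ ^ 2
      ≤ (β + ε) * (s + ε * ‖x - y‖ ^ 2) := by
    rcases hL.eq_or_lt with h0 | hpos
    · -- β + ε = 0 : W = 0
      rw [← h0, zero_mul]
      by_contra hcon
      push_neg at hcon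
      set W := ‖gradient R x - gradient R y + ε • (x - y)‖ ^ 2 with hWdef
      have hθ := hfam ((s + ε * ‖x - y‖ ^ 2 + 1) / (2 * W))
      rw [← h0] at hθ
      have hWne : W ≠ 0 := ne_of_gt hcon
      have heval : (2 * ((s + ε * ‖x - y‖ ^ 2 + 1) / (2 * W))
            - 0 * ((s + ε * ‖x - y‖ ^ 2 + 1) / (2 * W)) ^ 2) * W
          = s + ε * ‖x - y‖ ^ 2 + 1 := by
        field_simp
        try ring
      rw [heval] at hθ
      linarith
    · have hθ := hfam (1 / (β + ε))
      have heval : 2 * (1 / (β + ε)) - (β + ε) * (1 / (β + ε)) ^ 2 = 1 / (β + ε) := by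
        field_simp
        try ring
      rw [heval] at hθ
      have h6 : (β + ε) * (1 / (β + ε) * ‖gradient R x - gradient R y + ε • (x - y)‖ ^ 2)
          ≤ (β + ε) * (s + ε * ‖x - y‖ ^ 2) :=
        mul_le_mul_of_nonneg_left (by linarith) hpos.le
      have h7 : (β + ε) * (1 / (β + ε) * ‖gradient R x - gradient R y + ε • (x - y)‖ ^ 2)
          = ‖gradient R x - gradient R y + ε • (x - y)‖ ^ 2 := by
        field_simp
        try ring
      linarith [h6, h7.symm.le, h7.le]
  have K := key_arith (s + ε * ‖x - y‖ ^ 2)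
    (‖gradient R x - gradient R y + ε • (x - y)‖ ^ 2) (‖x - y‖ ^ 2) (β + ε) ε η
    (sq_nonneg _) (sq_nonneg _) hL hη hW1 h2
  -- expansions
  have eW : ‖gradient R x - gradient R y + ε • (x - y)‖ ^ 2
      = ‖gradient R x - gradient R y‖ ^ 2 + 2 * (ε * s) + ε ^ 2 * ‖x - y‖ ^ 2 := by
    rw [norm_add_sq_real, real_inner_smul_right, norm_smul, Real.norm_eq_abs, mul_pow, sq_abs,
      hsdef]
  have eZ : ‖x - y - η • (gradient R x - gradient R y)‖ ^ 2
      = ‖x - y‖ ^ 2 - 2 * (η * s) + η ^ 2 * ‖gradient R x - gradient R y‖ ^ 2 := by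
    rw [norm_sub_sq_real, real_inner_smul_right, norm_smul, Real.norm_eq_abs, mul_pow, sq_abs,
      real_inner_comm, hsdef]
  rw [eW] at K
  rw [ge_iff_le, eZ]
  nlinarith [K]
end

section
/- Consider the empirical risk R(ω) = (1/N)∑_i g(f(x_i,ω), y_i) where g is convex in its first argument with |∂_1 g| ≤ L_{g'}, and f is a two-layer network f(x, ω) = M^{-c}∑_j v_j σ(⟨A_j, x⟩) with |σ'| ≤ L_{σ'} and |σ''| ≤ L_{σ''}. Then with Σ̂ = (1/N)∑_i x_i x_i^T the empirical covariance, the Hessian satisfies ∇²R(ω) ⪰ -(L_{g'} L_{σ''} ‖v‖_∞ ‖Σ̂‖ + 2 L_{σ'} L_{g'} √‖Σ̂‖) M^{-c} I, i.e., the weak convexity parameter is O(M^{-c}). -/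
open scoped RealInnerProductSpace
open Sum

set_option maxHeartbeats 2000000


lemma aux_deriv_nonneg_of_monotone {h : ℝ → ℝ} (hm : Monotone h) {a : ℝ}
    (hd : DifferentiableAt ℝ h a) : 0 ≤ deriv h a := by
  have H := hd.hasDerivAt
  rw [hasDerivAt_iff_tendsto_slope] at H
  refine ge_of_tendsto H ?_
  filter_upwards [self_mem_nhdsWithin] with t ht
  simp only [Set.mem_compl_iff, Set.mem_singleton_iff] at ht
  rw [slope_def_field]
  rcases lt_or_gt_of_ne ht with h1 | h1
  · { rw [div_nonneg_iff]; right; constructor <;> [simpa using hm h1.le; linarith] }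
  · exact div_nonneg (by simpa using hm h1.le) (by linarith)

lemma aux_convex_deriv2_nonneg {h : ℝ → ℝ} (hcv : ConvexOn ℝ Set.univ h)
    (hd : ContDiff ℝ 2 h) (a : ℝ) : 0 ≤ deriv (deriv h) a := by
  have h2 : ContDiff ℝ (1 + 1 : ℕ) h := by norm_num [hd]
  have hder : ContDiff ℝ 1 (deriv h) := by
    have := (contDiff_succ_iff_deriv (n := 1)).mp (by exact_mod_cast h2)
    exact this.2.2
  refine aux_deriv_nonneg_of_monotone ?_ ((hder.differentiable one_ne_zero).differentiableAt)
  have := hcv.monotoneOn_deriv (fun x _ => (hd.differentiable (by norm_num)).differentiableAt)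
  exact monotoneOn_univ.mp this

lemma aux_inner_fderiv_gradient {E : Type*} [NormedAddCommGroup E] [InnerProductSpace ℝ E]
    [CompleteSpace E] {R : E → ℝ} (hR : ContDiff ℝ 2 R) (ω u : E) :
    ⟪u, fderiv ℝ (gradient R) ω u⟫ = deriv (deriv fun t : ℝ => R (ω + t • u)) 0 := by
  have hRd : Differentiable ℝ R := hR.differentiable (by norm_num)
  have hD : ContDiff ℝ 1 (fderiv ℝ R) := hR.fderiv_right (by norm_num)
  -- the line
  have hline : ∀ t : ℝ, HasDerivAt (fun s : ℝ => ω + s • u) u t := by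
    intro t
    simpa using ((hasDerivAt_id t).smul_const u).const_add ω
  -- first derivative of φ
  have hφ' : deriv (fun t : ℝ => R (ω + t • u)) = fun t => fderiv ℝ R (ω + t • u) u := by
    funext t
    exact ((hRd (ω + t • u)).hasFDerivAt.comp_hasDerivAt t (hline t)).deriv
  -- Hessian
  set H := fderiv ℝ (fderiv ℝ R) ω with hH
  have hHd : HasFDerivAt (fderiv ℝ R) H ω := ((hD.differentiable one_ne_zero) ω).hasFDerivAt
  have h2 : HasDerivAt (fun t : ℝ => fderiv ℝ R (ω + t • u) u) (H u u) 0 := by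
    have l0 : HasDerivAt (fun s : ℝ => ω + s • u) u 0 := hline 0
    have hcomp : HasDerivAt (fun t : ℝ => fderiv ℝ R (ω + t • u)) (H u) 0 := by
      have hHd' : HasFDerivAt (fderiv ℝ R) H (ω + (0:ℝ) • u) := by simpa using hHd
      exact hHd'.comp_hasDerivAt 0 l0
    have := (ContinuousLinearMap.apply ℝ ℝ u).hasFDerivAt.comp_hasDerivAt 0 hcomp
    exact this
  rw [hφ', h2.deriv]
  -- gradient side
  have hgrad : gradient R = fun z => (InnerProductSpace.toDual ℝ E).symm (fderiv ℝ R z) := rfl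
  rw [hgrad]
  rw [show (fun z => (InnerProductSpace.toDual ℝ E).symm (fderiv ℝ R z))
      = ⇑(InnerProductSpace.toDual ℝ E).symm ∘ fderiv ℝ R from rfl]
  rw [LinearIsometryEquiv.comp_fderiv]
  simp only [ContinuousLinearMap.coe_comp', Function.comp_apply,
    ContinuousLinearEquiv.coe_coe, LinearIsometryEquiv.coe_toContinuousLinearEquiv]
  rw [real_inner_comm]
  exact InnerProductSpace.toDual_symm_apply


/-- Weak convexity of the empirical risk of a two layer neural network: the
Hessian quadratic form is lower bounded at the order of the network scaling
`M^(-c)`. -/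
theorem two_layer_network_weak_convexity
    {d N M : ℕ} [NeZero M] (hN : 0 < N)
    (c : ℝ) (hc : 1 / 2 ≤ c) (hc1 : c ≤ 1)
    (σ : ℝ → ℝ) (hσ : ContDiff ℝ 2 σ)
    (Lg Lσ' Lσ'' : ℝ)
    (g : ℝ → ℝ → ℝ) (hg : ContDiff ℝ 2 (Function.uncurry g))
    (hgconv : ∀ b : ℝ, ConvexOn ℝ Set.univ fun a => g a b)
    (hLg : ∀ a b : ℝ, |deriv (fun t => g t b) a| ≤ Lg)
    (hLσ' : ∀ t, |deriv σ t| ≤ Lσ')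
    (hLσ'' : ∀ t, |deriv (deriv σ) t| ≤ Lσ'')
    (x : Fin N → EuclideanSpace ℝ (Fin d)) (y : Fin N → ℝ)
    (f : EuclideanSpace ℝ (Fin d) →
      EuclideanSpace ℝ (Fin M × Fin d ⊕ Fin M) → ℝ)
    (hf : ∀ z ωp, f z ωp = (M : ℝ) ^ (-c) *
      ∑ j : Fin M, ωp (inr j) * σ (∑ k : Fin d, ωp (inl (j, k)) * z k))
    (R : EuclideanSpace ℝ (Fin M × Fin d ⊕ Fin M) → ℝ)
    (hR : R = fun ωp => (1 / N : ℝ) * ∑ i, g (f (x i) ωp) (y i))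
    (Sighat : EuclideanSpace ℝ (Fin d) →L[ℝ] EuclideanSpace ℝ (Fin d))
    (hSig : ∀ a k, Sighat a k = (1 / N : ℝ) * ∑ i, x i k * ⟪x i, a⟫)
    (ω u : EuclideanSpace ℝ (Fin M × Fin d ⊕ Fin M)) :
    ⟪u, fderiv ℝ (gradient R) ω u⟫ ≥
      -(Lg * Lσ'' * (⨆ j : Fin M, |ω (inr j)|) * ‖Sighat‖
          + 2 * Lσ' * Lg * Real.sqrt ‖Sighat‖) * (M : ℝ) ^ (-c) * ‖u‖ ^ 2 := by
  classical
  have hNpos : (0:ℝ) < N := by exact_mod_cast hN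
  have hMpos : (0:ℝ) < M := by exact_mod_cast Nat.pos_of_ne_zero (NeZero.ne M)
  set s : ℝ := (M : ℝ) ^ (-c) with hs
  have hs0 : 0 < s := Real.rpow_pos_of_pos hMpos _
  -- basic smoothness facts
  have hproj : ∀ (p : Fin M × Fin d ⊕ Fin M), ContDiff ℝ 2
      (fun ωp : EuclideanSpace ℝ (Fin M × Fin d ⊕ Fin M) => ωp p) :=
    fun p => contDiff_piLp_apply 2
  have hgb : ∀ b : ℝ, ContDiff ℝ 2 (fun a => g a b) := fun b =>
    hg.comp (contDiff_id.prodMk contDiff_const)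
  have hR2 : ContDiff ℝ 2 R := by
    rw [hR]
    refine contDiff_const.mul (ContDiff.sum fun i _ => ?_)
    have : (fun ωp : EuclideanSpace ℝ (Fin M × Fin d ⊕ Fin M) => g (f (x i) ωp) (y i))
        = (fun a => g a (y i)) ∘ (fun ωp => f (x i) ωp) := rfl
    rw [this]
    refine (hgb (y i)).comp ?_
    have : (fun ωp : EuclideanSpace ℝ (Fin M × Fin d ⊕ Fin M) => f (x i) ωp)
        = fun ωp => (M : ℝ) ^ (-c) * ∑ j : Fin M, ωp (inr j) *
            σ (∑ k : Fin d, ωp (inl (j, k)) * x i k) := funext (hf (x i))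
    rw [this]
    exact contDiff_const.mul (ContDiff.sum fun j _ => (hproj _).mul
      (hσ.comp (ContDiff.sum fun k _ => (hproj _).mul contDiff_const)))
  rw [aux_inner_fderiv_gradient hR2 ω u]
  -- abbreviations
  set v : Fin M → ℝ := fun j => ω (inr j) with hv
  set w : Fin M → ℝ := fun j => u (inr j) with hw
  set A : Fin N → Fin M → ℝ := fun i j => ∑ k, ω (inl (j, k)) * x i k with hA
  set B : Fin N → Fin M → ℝ := fun i j => ∑ k, u (inl (j, k)) * x i k with hB
  set F : Fin N → ℝ → ℝ := fun i t => s * ∑ j, (v j + t * w j) * σ (A i j + t * B i j) with hF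
  -- φ in explicit form
  have hφeq : (fun t : ℝ => R (ω + t • u)) = fun t => (1 / N : ℝ) * ∑ i, g (F i t) (y i) := by
    funext t
    rw [hR]
    simp only
    congr 1
    refine Finset.sum_congr rfl fun i _ => ?_
    congr 1
    rw [hf, hF]
    simp only
    rw [hs]
    congr 1
    refine Finset.sum_congr rfl fun j _ => ?_
    have h1 : (ω + t • u) (inr j) = v j + t * w j := by
      simp [hv, hw, PiLp.add_apply, PiLp.smul_apply, smul_eq_mul]
    have h2 : (∑ k, (ω + t • u) (inl (j, k)) * x i k) = A i j + t * B i j := by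
      simp only [PiLp.add_apply, PiLp.smul_apply, smul_eq_mul, add_mul,
        Finset.sum_add_distrib, hA, hB, Finset.mul_sum, mul_assoc]
    rw [h1, h2]
  rw [hφeq]
  -- differentiability facts
  have hσdiff : Differentiable ℝ σ := hσ.differentiable (by norm_num)
  have hσ'cd : ContDiff ℝ 1 (deriv σ) := by
    have h2 : ContDiff ℝ (1 + 1 : ℕ) σ := by norm_num [hσ]
    exact ((contDiff_succ_iff_deriv (n := 1)).mp (by exact_mod_cast h2)).2.2
  have hσ'diff : Differentiable ℝ (deriv σ) := hσ'cd.differentiable one_ne_zero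
  have hgbdiff : ∀ b : ℝ, Differentiable ℝ (fun a => g a b) := fun b =>
    (hgb b).differentiable (by norm_num)
  set G1 : ℝ → ℝ → ℝ := fun a b => deriv (fun z => g z b) a with hG1
  have hG1diff : ∀ b : ℝ, Differentiable ℝ (fun a => G1 a b) := by
    intro b
    have h2 : ContDiff ℝ (1 + 1 : ℕ) (fun a => g a b) := by norm_num [hgb b]
    exact (((contDiff_succ_iff_deriv (n := 1)).mp (by exact_mod_cast h2)).2.2).differentiable one_ne_zero
  set G2 : ℝ → ℝ → ℝ := fun a b => deriv (fun z => G1 z b) a with hG2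
  set F' : Fin N → ℝ → ℝ := fun i t => s * ∑ j,
      (w j * σ (A i j + t * B i j) + (v j + t * w j) * (deriv σ (A i j + t * B i j) * B i j))
    with hF'def
  -- derivative of F
  have hFaff : ∀ i j (t : ℝ), HasDerivAt (fun t : ℝ => A i j + t * B i j) (B i j) t :=
    fun i j t => (hasDerivAt_mul_const (B i j)).const_add (A i j)
  have hvw : ∀ j (t : ℝ), HasDerivAt (fun t : ℝ => v j + t * w j) (w j) t :=
    fun j t => (hasDerivAt_mul_const (w j)).const_add (v j)
  have hσc : ∀ i j (t : ℝ), HasDerivAt (fun t : ℝ => σ (A i j + t * B i j))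
      (deriv σ (A i j + t * B i j) * B i j) t :=
    fun i j t => ((hσdiff _).hasDerivAt).comp t (hFaff i j t)
  have hF' : ∀ i (t : ℝ), HasDerivAt (F i) (F' i t) t := by
    intro i t
    rw [hF, hF'def]
    simp only
    exact HasDerivAt.const_mul s (HasDerivAt.fun_sum fun j _ => (hvw j t).mul (hσc i j t))
  -- first derivative of φ
  set Φ1 : ℝ → ℝ := fun t => (1 / N : ℝ) * ∑ i, G1 (F i t) (y i) * F' i t with hΦ1def
  have hφ1 : ∀ t : ℝ, HasDerivAt (fun t => (1 / N : ℝ) * ∑ i, g (F i t) (y i)) (Φ1 t) t := by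
    intro t
    refine HasDerivAt.const_mul _ (HasDerivAt.fun_sum fun i _ => ?_)
    exact (((hgbdiff (y i)) (F i t)).hasDerivAt).comp t (hF' i t)
  have hderivφ : deriv (fun t => (1 / N : ℝ) * ∑ i, g (F i t) (y i)) = Φ1 :=
    funext fun t => (hφ1 t).deriv
  rw [hderivφ]
  -- second derivative
  set F'' : Fin N → ℝ := fun i => s * ∑ j,
      (2 * (w j * (deriv σ (A i j) * B i j)) + v j * (deriv (deriv σ) (A i j) * (B i j * B i j)))
    with hF''def
  set val : ℝ := (1 / N : ℝ) * ∑ i,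
      (G2 (F i 0) (y i) * (F' i 0 * F' i 0) + G1 (F i 0) (y i) * F'' i) with hval
  have hΦ1' : HasDerivAt Φ1 val 0 := by
    rw [hΦ1def, hval]
    refine HasDerivAt.const_mul _ (HasDerivAt.fun_sum fun i _ => ?_)
    have ha : HasDerivAt (fun t => G1 (F i t) (y i)) (G2 (F i 0) (y i) * F' i 0) 0 :=
      (((hG1diff (y i)) (F i 0)).hasDerivAt).comp 0 (hF' i 0)
    have hσc' : ∀ j, HasDerivAt (fun t : ℝ => deriv σ (A i j + t * B i j))
        (deriv (deriv σ) (A i j + 0 * B i j) * B i j) 0 :=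
      fun j => ((hσ'diff _).hasDerivAt).comp 0 (hFaff i j 0)
    have hb : HasDerivAt (F' i) (F'' i) 0 := by
      rw [hF'def, hF''def]
      simp only
      have big : HasDerivAt (fun t : ℝ => ∑ j,
          (w j * σ (A i j + t * B i j) + (v j + t * w j) * (deriv σ (A i j + t * B i j) * B i j)))
          (∑ j, ((w j * (deriv σ (A i j + 0 * B i j) * B i j)) +
            (w j * (deriv σ (A i j + 0 * B i j) * B i j) +
             (v j + 0 * w j) * (deriv (deriv σ) (A i j + 0 * B i j) * B i j * B i j)))) 0 := by
        refine HasDerivAt.fun_sum fun j _ => ?_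
        exact ((hσc i j 0).const_mul (w j)).add ((hvw j 0).mul ((hσc' j).mul_const (B i j)))
      have := big.const_mul s
      refine this.congr_deriv ?_
      congr 1
      refine Finset.sum_congr rfl fun j _ => ?_
      simp only [zero_mul, add_zero]
      ring
    have := ha.mul hb
    refine this.congr_deriv ?_
    ring
  rw [hΦ1'.deriv]
  -- nonnegativity facts
  have hLg0 : 0 ≤ Lg := le_trans (abs_nonneg _) (hLg 0 0)
  have hLσ'0 : 0 ≤ Lσ' := le_trans (abs_nonneg _) (hLσ' 0)
  have hLσ''0 : 0 ≤ Lσ'' := le_trans (abs_nonneg _) (hLσ'' 0)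
  set V : ℝ := ⨆ j : Fin M, |ω (inr j)| with hVdef
  have hNe : Nonempty (Fin M) := ⟨⟨0, Nat.pos_of_ne_zero (NeZero.ne M)⟩⟩
  have hVj : ∀ j, |v j| ≤ V := by
    intro j
    have h := le_ciSup (f := fun j : Fin M => |ω (inr j)|)
      (Set.finite_range fun j : Fin M => |ω (inr j)|).bddAbove j
    rw [hVdef]
    simpa [hv] using h
  have hV0 : 0 ≤ V := le_trans (abs_nonneg _) (hVj (Classical.arbitrary _))
  -- covariance bounds
  set Q : Fin M → ℝ := fun j => ∑ k, u (inl (j, k)) ^ 2 with hQ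
  have hQ0 : ∀ j, 0 ≤ Q j := by intro j; rw [hQ]; positivity
  set U : Fin M → EuclideanSpace ℝ (Fin d) :=
    fun j => (WithLp.equiv 2 (Fin d → ℝ)).symm (fun k => u (inl (j, k))) with hU
  have hUapp : ∀ j k, U j k = u (inl (j, k)) := fun j k => rfl
  have hBinner : ∀ i j, ⟪x i, U j⟫ = B i j := by
    intro i j
    rw [PiLp.inner_apply, hB]
    simp only [RCLike.inner_apply, conj_trivial, hUapp]
  have hUsq : ∀ j, ‖U j‖ ^ 2 = Q j := by
    intro j
    rw [← real_inner_self_eq_norm_sq, PiLp.inner_apply, hQ]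
    simp only [RCLike.inner_apply, conj_trivial, hUapp]
    exact Finset.sum_congr rfl fun k _ => (sq _).symm
  set P1 : Fin M → ℝ := fun j => (1 / N : ℝ) * ∑ i, |B i j| with hP1
  set P2 : Fin M → ℝ := fun j => (1 / N : ℝ) * ∑ i, B i j * B i j with hP2
  have K1 : ∀ j, P2 j ≤ ‖Sighat‖ * Q j := by
    intro j
    have e1 : ⟪U j, Sighat (U j)⟫ = P2 j := by
      rw [PiLp.inner_apply]
      simp only [RCLike.inner_apply, conj_trivial]
      calc (∑ k, Sighat (U j) k * U j k)
          = ∑ k, ∑ i, (1 / N : ℝ) * ((u (inl (j, k)) * x i k) * B i j) := by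
            refine Finset.sum_congr rfl fun k _ => ?_
            rw [mul_comm]
            rw [hSig (U j) k, Finset.mul_sum, Finset.mul_sum]
            refine Finset.sum_congr rfl fun i _ => ?_
            rw [hBinner i j, hUapp]
            ring
        _ = ∑ i, (1 / N : ℝ) * (B i j * B i j) := by
            rw [Finset.sum_comm]
            refine Finset.sum_congr rfl fun i _ => ?_
            have e2 : ∑ k, (1 / N : ℝ) * ((u (inl (j, k)) * x i k) * B i j)
                = (1 / N : ℝ) * ((∑ k, u (inl (j, k)) * x i k) * B i j) := by
              rw [Finset.sum_mul, Finset.mul_sum]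
            rw [e2]
        _ = P2 j := by
            show _ = (1 / N : ℝ) * ∑ i, B i j * B i j
            rw [Finset.mul_sum]
    rw [← e1]
    calc ⟪U j, Sighat (U j)⟫ ≤ ‖U j‖ * ‖Sighat (U j)‖ := real_inner_le_norm _ _
      _ ≤ ‖U j‖ * (‖Sighat‖ * ‖U j‖) :=
          mul_le_mul_of_nonneg_left (Sighat.le_opNorm _) (norm_nonneg _)
      _ = ‖Sighat‖ * ‖U j‖ ^ 2 := by ring
      _ = ‖Sighat‖ * Q j := by rw [hUsq]
  have hP20 : ∀ j, 0 ≤ P2 j := by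
    intro j
    show 0 ≤ (1 / N : ℝ) * ∑ i, B i j * B i j
    exact mul_nonneg (by positivity) (Finset.sum_nonneg fun i _ => mul_self_nonneg _)
  have K2 : ∀ j, P1 j ≤ Real.sqrt ‖Sighat‖ * Real.sqrt (Q j) := by
    intro j
    have hcs := sq_sum_le_card_mul_sum_sq (s := (Finset.univ : Finset (Fin N)))
      (f := fun i => |B i j|)
    simp only [Finset.card_univ, Fintype.card_fin, sq_abs] at hcs
    have h1 : (P1 j) ^ 2 ≤ P2 j := by
      show ((1 / N : ℝ) * ∑ i, |B i j|) ^ 2 ≤ (1 / N : ℝ) * ∑ i, B i j * B i j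
      rw [mul_pow]
      have hsq : ∑ i, B i j * B i j = ∑ i, B i j ^ 2 :=
        Finset.sum_congr rfl fun i _ => (sq _).symm
      rw [hsq]
      have h2 := mul_le_mul_of_nonneg_left hcs (by positivity : (0:ℝ) ≤ (1/N)^2)
      refine h2.trans (le_of_eq ?_)
      field_simp
    have hP10 : 0 ≤ P1 j := by
      show 0 ≤ (1 / N : ℝ) * ∑ i, |B i j|
      positivity
    have h2 : P1 j ≤ Real.sqrt (‖Sighat‖ * Q j) := by
      refine (Real.le_sqrt hP10 (mul_nonneg (norm_nonneg _) (hQ0 j))).mpr ?_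
      exact h1.trans (K1 j)
    refine h2.trans (le_of_eq ?_)
    exact Real.sqrt_mul (norm_nonneg _) _
  -- convexity: second derivative of g is nonnegative
  have hG2nn : ∀ i : Fin N, 0 ≤ G2 (F i 0) (y i) := fun i =>
    aux_convex_deriv2_nonneg (hgconv (y i)) (hgb (y i)) (F i 0)
  set SA : ℝ := ∑ j, |w j| * P1 j with hSAdef
  set SB : ℝ := ∑ j, |v j| * P2 j with hSBdef
  -- step 1: drop the PSD part
  have hstep1 : (1 / N : ℝ) * ∑ i, G1 (F i 0) (y i) * F'' i ≤ val := by
    rw [hval]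
    refine mul_le_mul_of_nonneg_left (Finset.sum_le_sum fun i _ => ?_) (by positivity)
    exact le_add_of_nonneg_left (mul_nonneg (hG2nn i) (mul_self_nonneg _))
  -- step 2: bound g' by Lg
  have hstep2 : -(Lg * ((1 / N : ℝ) * ∑ i, |F'' i|))
      ≤ (1 / N : ℝ) * ∑ i, G1 (F i 0) (y i) * F'' i := by
    have e : (1 / N : ℝ) * ∑ i, -(Lg * |F'' i|) = -(Lg * ((1 / N : ℝ) * ∑ i, |F'' i|)) := by
      rw [Finset.sum_neg_distrib, ← Finset.mul_sum]
      ring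
    rw [← e]
    refine mul_le_mul_of_nonneg_left (Finset.sum_le_sum fun i _ => ?_) (by positivity)
    have h1 : |G1 (F i 0) (y i) * F'' i| ≤ Lg * |F'' i| := by
      rw [abs_mul]
      exact mul_le_mul_of_nonneg_right (hLg _ _) (abs_nonneg _)
    exact neg_le_of_abs_le h1
  -- step 3: pointwise bound on F''
  have habs : ∀ i, |F'' i| ≤ s * ∑ j,
      (2 * |w j| * Lσ' * |B i j| + |v j| * Lσ'' * (B i j * B i j)) := by
    intro i
    show |s * ∑ j, (2 * (w j * (deriv σ (A i j) * B i j)) +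
        v j * (deriv (deriv σ) (A i j) * (B i j * B i j)))| ≤ _
    rw [abs_mul, abs_of_pos hs0]
    refine mul_le_mul_of_nonneg_left ?_ hs0.le
    refine (Finset.abs_sum_le_sum_abs _ _).trans (Finset.sum_le_sum fun j _ => ?_)
    refine (abs_add_le _ _).trans ?_
    have e1 : |2 * (w j * (deriv σ (A i j) * B i j))|
        = 2 * |w j| * |deriv σ (A i j)| * |B i j| := by
      rw [abs_mul, abs_mul, abs_mul, abs_two]
      ring
    have e2 : |v j * (deriv (deriv σ) (A i j) * (B i j * B i j))|
        = |v j| * |deriv (deriv σ) (A i j)| * (B i j * B i j) := by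
      rw [abs_mul, abs_mul, abs_mul_self]
      ring
    rw [e1, e2]
    refine add_le_add ?_ ?_
    · exact mul_le_mul_of_nonneg_right
        (mul_le_mul_of_nonneg_left (hLσ' _) (by positivity)) (abs_nonneg _)
    · exact mul_le_mul_of_nonneg_right
        (mul_le_mul_of_nonneg_left (hLσ'' _) (abs_nonneg _)) (mul_self_nonneg _)
  have hstep3 : (1 / N : ℝ) * ∑ i, |F'' i| ≤ s * (2 * Lσ' * SA + Lσ'' * SB) := by
    have h1 : (1 / N : ℝ) * ∑ i, |F'' i| ≤ (1 / N : ℝ) * ∑ i,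
        (s * ∑ j, (2 * |w j| * Lσ' * |B i j| + |v j| * Lσ'' * (B i j * B i j))) :=
      mul_le_mul_of_nonneg_left (Finset.sum_le_sum fun i _ => habs i) (by positivity)
    refine h1.trans (le_of_eq ?_)
    show _ = s * (2 * Lσ' * ∑ j, |w j| * ((1 / N : ℝ) * ∑ i, |B i j|)
        + Lσ'' * ∑ j, |v j| * ((1 / N : ℝ) * ∑ i, B i j * B i j))
    simp only [Finset.mul_sum, mul_add, Finset.sum_add_distrib]
    congr 1
    · rw [Finset.sum_comm]
      exact Finset.sum_congr rfl fun j _ => Finset.sum_congr rfl fun i _ => by ring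
    · rw [Finset.sum_comm]
      exact Finset.sum_congr rfl fun j _ => Finset.sum_congr rfl fun i _ => by ring
  -- norms
  have hnorm : ∑ j, (w j ^ 2 + Q j) = ‖u‖ ^ 2 := by
    have h1 : ‖u‖ ^ 2 = ∑ p, u p ^ 2 := by
      rw [EuclideanSpace.norm_eq, Real.sq_sqrt (by positivity)]
      exact Finset.sum_congr rfl fun p _ => by rw [Real.norm_eq_abs, sq_abs]
    rw [h1, Fintype.sum_sum_type (f := fun p => u p ^ 2), Fintype.sum_prod_type,
      Finset.sum_add_distrib, add_comm]
  have hQsum : ∑ j, Q j ≤ ‖u‖ ^ 2 := by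
    rw [← hnorm]
    exact Finset.sum_le_sum fun j _ => le_add_of_nonneg_left (sq_nonneg _)
  have hSAle : SA ≤ Real.sqrt ‖Sighat‖ * (‖u‖ ^ 2 / 2) := by
    rw [hSAdef]
    calc ∑ j, |w j| * P1 j ≤ ∑ j, |w j| * (Real.sqrt ‖Sighat‖ * Real.sqrt (Q j)) :=
          Finset.sum_le_sum fun j _ => mul_le_mul_of_nonneg_left (K2 j) (abs_nonneg _)
      _ ≤ ∑ j, Real.sqrt ‖Sighat‖ * ((w j ^ 2 + Q j) / 2) := by
          refine Finset.sum_le_sum fun j _ => ?_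
          have h2 := two_mul_le_add_sq |w j| (Real.sqrt (Q j))
          rw [sq_abs, Real.sq_sqrt (hQ0 j)] at h2
          nlinarith [mul_le_mul_of_nonneg_left h2 (Real.sqrt_nonneg ‖Sighat‖)]
      _ = Real.sqrt ‖Sighat‖ * (‖u‖ ^ 2 / 2) := by
          rw [← Finset.mul_sum, ← Finset.sum_div, hnorm]
  have hSBle : SB ≤ V * (‖Sighat‖ * ‖u‖ ^ 2) := by
    rw [hSBdef]
    calc ∑ j, |v j| * P2 j ≤ ∑ j, V * (‖Sighat‖ * Q j) :=
          Finset.sum_le_sum fun j _ => mul_le_mul (hVj j) (K1 j) (hP20 j) hV0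
      _ = V * (‖Sighat‖ * ∑ j, Q j) := by
          rw [Finset.mul_sum, Finset.mul_sum]
      _ ≤ V * (‖Sighat‖ * ‖u‖ ^ 2) :=
          mul_le_mul_of_nonneg_left (mul_le_mul_of_nonneg_left hQsum (norm_nonneg _)) hV0
  -- final assembly
  have hmain : Lg * (s * (2 * Lσ' * SA + Lσ'' * SB))
      ≤ (Lg * Lσ'' * V * ‖Sighat‖ + 2 * Lσ' * Lg * Real.sqrt ‖Sighat‖) * s * ‖u‖ ^ 2 := by
    have hin : 2 * Lσ' * SA + Lσ'' * SB
        ≤ 2 * Lσ' * (Real.sqrt ‖Sighat‖ * (‖u‖ ^ 2 / 2)) + Lσ'' * (V * (‖Sighat‖ * ‖u‖ ^ 2)) :=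
      add_le_add (mul_le_mul_of_nonneg_left hSAle (by linarith))
        (mul_le_mul_of_nonneg_left hSBle hLσ''0)
    have h3 := mul_le_mul_of_nonneg_left (mul_le_mul_of_nonneg_left hin hs0.le) hLg0
    refine h3.trans ?_
    have hp : 0 ≤ Lσ' * Lg * Real.sqrt ‖Sighat‖ * s * ‖u‖ ^ 2 :=
      mul_nonneg (mul_nonneg (mul_nonneg (mul_nonneg hLσ'0 hLg0)
        (Real.sqrt_nonneg _)) hs0.le) (sq_nonneg _)
    nlinarith [hp]
  rw [ge_iff_le]
  calc -(Lg * Lσ'' * V * ‖Sighat‖ + 2 * Lσ' * Lg * Real.sqrt ‖Sighat‖) * s * ‖u‖ ^ 2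
      ≤ -(Lg * (s * (2 * Lσ' * SA + Lσ'' * SB))) := by nlinarith [hmain]
    _ ≤ -(Lg * ((1 / N : ℝ) * ∑ i, |F'' i|)) := by
        nlinarith [mul_le_mul_of_nonneg_left hstep3 hLg0]
    _ ≤ (1 / N : ℝ) * ∑ i, G1 (F i 0) (y i) * F'' i := hstep2
    _ ≤ val := hstep1
end

section
/- Let f(x, ω) = M₂^{-c} ∑_{i=1}^{M₂} v_i σ(M₁^{-c} ∑_{s=1}^{M₁} A^{(2)}_{is} ⟨A^{(1)}_s, x⟩) be a three-layer network with fixed middle layer A^{(2)} and parameter ω = (A^{(1)}, v). If |σ'| ≤ L_{σ'}, |σ''| ≤ L_{σ''}, and |∂₁g| ≤ L_{g'}, then with Σ̂ the covariate empirical covariance and Σ̂_{A^{(2)}} = M₂^{-1}(A^{(2)})^T A^{(2)}, the empirical risk Hessian satisfies ∇²R(ω) ⪰ -(L_{σ''}L_{g'} ‖Σ̂‖‖Σ̂_{A^{(2)}}‖ ‖v‖_∞ / (M₁^{2c} M₂^{c-1}) + 2 L_{g'} L_{σ'} √(‖Σ̂‖‖Σ̂_{A^{(2)}}‖) / (M₂^{c-1/2}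 M₁^{c})) I. -/
open scoped RealInnerProductSpace
open Sum

lemma mono_deriv_nonneg' {ψ : ℝ → ℝ} (hm : Monotone ψ) {x : ℝ}
    (hd : DifferentiableAt ℝ ψ x) : 0 ≤ deriv ψ x := by
  have h := hd.hasDerivAt
  rw [hasDerivAt_iff_tendsto_slope] at h
  have h2 : Filter.Tendsto (slope ψ x) (nhdsWithin x (Set.Ioi x)) (nhds (deriv ψ x)) :=
    h.mono_left (nhdsWithin_mono x (fun y hy => ne_of_gt hy))
  refine ge_of_tendsto h2 ?_
  filter_upwards [self_mem_nhdsWithin] with y hy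
  have : x ≤ y := le_of_lt hy
  have hnum : 0 ≤ ψ y - ψ x := sub_nonneg.2 (hm this)
  have hden : 0 ≤ y - x := sub_nonneg.2 this
  simpa [slope_def_field] using div_nonneg hnum hden

lemma hessian_line {E : Type*} [NormedAddCommGroup E] [InnerProductSpace ℝ E]
    [CompleteSpace E] (R : E → ℝ) (hR : ContDiff ℝ 2 R) (ω u : E) :
    HasDerivAt (fun t : ℝ => fderiv ℝ R (ω + t • u) u)
      ⟪u, fderiv ℝ (gradient R) ω u⟫ 0 := by
  have hF : ContDiff ℝ 1 (fderiv ℝ R) := hR.fderiv_right (by norm_num)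
  have hFd : Differentiable ℝ (fderiv ℝ R) := hF.differentiable one_ne_zero
  have hline : HasDerivAt (fun t : ℝ => ω + t • u) u 0 := by
    simpa using ((hasDerivAt_id (0:ℝ)).smul_const u).const_add ω
  have h1 : HasDerivAt (fun t : ℝ => fderiv ℝ R (ω + t • u))
      (fderiv ℝ (fderiv ℝ R) ω u) 0 := by
    have := (hFd (ω + (0:ℝ) • u)).hasFDerivAt.comp_hasDerivAt 0 hline
    simp only [zero_smul, add_zero] at this
    exact this
  have h2 : HasDerivAt (fun t : ℝ => fderiv ℝ R (ω + t • u) u)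
      (fderiv ℝ (fderiv ℝ R) ω u u) 0 :=
    (ContinuousLinearMap.apply ℝ ℝ u).hasFDerivAt.comp_hasDerivAt 0 h1
  have hgrad : ⟪u, fderiv ℝ (gradient R) ω u⟫ = fderiv ℝ (fderiv ℝ R) ω u u := by
    have h3 : gradient R = fun w => (InnerProductSpace.toDual ℝ E).symm (fderiv ℝ R w) := rfl
    rw [h3]
    have hcomp : (fun w => (InnerProductSpace.toDual ℝ E).symm (fderiv ℝ R w))
        = ((InnerProductSpace.toDual ℝ E).symm ∘ fderiv ℝ R) := rfl
    rw [hcomp, LinearIsometryEquiv.comp_fderiv]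
    simp only [ContinuousLinearMap.coe_comp', Function.comp_apply,
      LinearIsometryEquiv.coe_coe'']
    rw [real_inner_comm, InnerProductSpace.toDual_symm_apply]
  rw [hgrad]
  exact h2

set_option maxHeartbeats 1000000 in
/-- Weak convexity parameter for a three layer neural network with fixed
middle layer: the parameter `ω` concatenates the first layer `A⁽¹⁾`
(entries `ω (inl (s,k))`) and the third layer `v` (entries `ω (inr i)`). -/
theorem three_layer_network_weak_convexity
    {d N M₁ M₂ : ℕ} [NeZero M₂] (hN : 0 < N) (hM₁ : 1 ≤ M₁)
    (c : ℝ) (hc : 1 / 2 ≤ c) (hc1 : c ≤ 1)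
    (σ : ℝ → ℝ) (hσ : ContDiff ℝ 2 σ)
    (Lg Lσ' Lσ'' : ℝ)
    (g : ℝ → ℝ → ℝ) (hg : ContDiff ℝ 2 (Function.uncurry g))
    (hgconv : ∀ b : ℝ, ConvexOn ℝ Set.univ fun a => g a b)
    (hLg : ∀ a b : ℝ, |deriv (fun t => g t b) a| ≤ Lg)
    (hLσ' : ∀ t, |deriv σ t| ≤ Lσ')
    (hLσ'' : ∀ t, |deriv (deriv σ) t| ≤ Lσ'')
    (A2 : Fin M₂ → Fin M₁ → ℝ)
    (x : Fin N → EuclideanSpace ℝ (Fin d)) (y : Fin N → ℝ)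
    (f : EuclideanSpace ℝ (Fin d) →
      EuclideanSpace ℝ (Fin M₁ × Fin d ⊕ Fin M₂) → ℝ)
    (hf : ∀ z ωp, f z ωp = (M₂ : ℝ) ^ (-c) *
      ∑ i : Fin M₂, ωp (inr i) *
        σ ((M₁ : ℝ) ^ (-c) * ∑ s : Fin M₁, A2 i s *
          ∑ k : Fin d, ωp (inl (s, k)) * z k))
    (R : EuclideanSpace ℝ (Fin M₁ × Fin d ⊕ Fin M₂) → ℝ)
    (hR : R = fun ωp => (1 / N : ℝ) * ∑ i, g (f (x i) ωp) (y i))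
    (Sighat : EuclideanSpace ℝ (Fin d) →L[ℝ] EuclideanSpace ℝ (Fin d))
    (hSig : ∀ a k, Sighat a k = (1 / N : ℝ) * ∑ i, x i k * ⟪x i, a⟫)
    (SigA2 : EuclideanSpace ℝ (Fin M₁) →L[ℝ] EuclideanSpace ℝ (Fin M₁))
    (hSigA2 : ∀ a s, SigA2 a s =
      (1 / M₂ : ℝ) * ∑ i : Fin M₂, A2 i s * ∑ s' : Fin M₁, A2 i s' * a s')
    (ω u : EuclideanSpace ℝ (Fin M₁ × Fin d ⊕ Fin M₂)) :
    ⟪u, fderiv ℝ (gradient R) ω u⟫ ≥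
      -(Lσ'' * Lg * ‖Sighat‖ * ‖SigA2‖ * (⨆ i : Fin M₂, |ω (inr i)|) /
          ((M₁ : ℝ) ^ (2 * c) * (M₂ : ℝ) ^ (c - 1))
        + 2 * Lg * Lσ' * Real.sqrt (‖Sighat‖ * ‖SigA2‖) /
          ((M₂ : ℝ) ^ (c - 1 / 2) * (M₁ : ℝ) ^ c)) * ‖u‖ ^ 2 := by
  classical
  -- abbreviations
  set a : Fin N → Fin M₁ → ℝ := fun n s => ∑ k, ω (inl (s,k)) * x n k with ha
  set b : Fin N → Fin M₁ → ℝ := fun n s => ∑ k, u (inl (s,k)) * x n k with hb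
  set h : Fin N → Fin M₂ → ℝ := fun n j => (M₁:ℝ)^(-c) * ∑ s, A2 j s * a n s with hh
  set κ : Fin N → Fin M₂ → ℝ := fun n j => (M₁:ℝ)^(-c) * ∑ s, A2 j s * b n s with hκ
  set F : Fin N → ℝ → ℝ := fun n t =>
    (M₂:ℝ)^(-c) * ∑ j, (ω (inr j) + t * u (inr j)) * σ (h n j + t * κ n j) with hF
  set F1 : Fin N → ℝ → ℝ := fun n t =>
    (M₂:ℝ)^(-c) * ∑ j, (u (inr j) * σ (h n j + t * κ n j)
      + (ω (inr j) + t * u (inr j)) * (deriv σ (h n j + t * κ n j) * κ n j)) with hF1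
  set F2 : Fin N → ℝ := fun n =>
    (M₂:ℝ)^(-c) * ∑ j, (2 * (u (inr j) * (deriv σ (h n j) * κ n j))
      + ω (inr j) * (deriv (deriv σ) (h n j) * κ n j * κ n j)) with hF2
  -- smoothness of σ pieces
  have hσd : Differentiable ℝ σ := hσ.differentiable (by norm_num)
  have hσ1 : ContDiff ℝ 1 (deriv σ) := by
    have h2 : (2 : WithTop ℕ∞) = 1 + 1 := by norm_num
    exact (contDiff_succ_iff_deriv.mp (h2 ▸ hσ)).2.2
  have hσ'd : Differentiable ℝ (deriv σ) := hσ1.differentiable one_ne_zero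
  -- smoothness of g slices
  have hGb : ∀ n : Fin N, ContDiff ℝ 2 (fun a => g a (y n)) := fun n =>
    hg.comp (contDiff_id.prodMk contDiff_const)
  have hGbd : ∀ n : Fin N, Differentiable ℝ (fun a => g a (y n)) := fun n =>
    (hGb n).differentiable (by norm_num)
  have hdg1 : ∀ n : Fin N, ContDiff ℝ 1 (deriv (fun a => g a (y n))) := by
    intro n
    have h2 : (2 : WithTop ℕ∞) = 1 + 1 := by norm_num
    exact (contDiff_succ_iff_deriv.mp (h2 ▸ hGb n)).2.2
  have hdgd : ∀ n : Fin N, Differentiable ℝ (deriv (fun a => g a (y n))) := fun n =>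
    (hdg1 n).differentiable one_ne_zero
  -- derivative facts for F
  have hHF : ∀ (n : Fin N) (t : ℝ), HasDerivAt (F n) (F1 n t) t := by
    intro n t
    rw [hF, hF1]
    simp only
    refine HasDerivAt.const_mul _ ?_
    refine HasDerivAt.fun_sum ?_
    intro j _
    have hin : HasDerivAt (fun t : ℝ => h n j + t * κ n j) (κ n j) t := by
      simpa using (hasDerivAt_mul_const (κ n j)).const_add (h n j)
    have hσc : HasDerivAt (fun t : ℝ => σ (h n j + t * κ n j))
        (deriv σ (h n j + t * κ n j) * κ n j) t :=
      (hσd _).hasDerivAt.comp t hin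
    have hv : HasDerivAt (fun t : ℝ => ω (inr j) + t * u (inr j)) (u (inr j)) t := by
      simpa using (hasDerivAt_mul_const (u (inr j))).const_add (ω (inr j))
    exact hv.mul hσc
  have hHF1 : ∀ (n : Fin N), HasDerivAt (F1 n) (F2 n) 0 := by
    intro n
    rw [hF1, hF2]
    simp only
    refine HasDerivAt.const_mul _ ?_
    refine HasDerivAt.fun_sum ?_
    intro j _
    have hin : HasDerivAt (fun t : ℝ => h n j + t * κ n j) (κ n j) 0 := by
      simpa using (hasDerivAt_mul_const (κ n j)).const_add (h n j)
    have hin0 : h n j + (0:ℝ) * κ n j = h n j := by ring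
    have hσc : HasDerivAt (fun t : ℝ => σ (h n j + t * κ n j))
        (deriv σ (h n j) * κ n j) 0 := by
      have := (hσd (h n j + (0:ℝ) * κ n j)).hasDerivAt.comp 0 hin
      rwa [hin0] at this
    have hσ'c : HasDerivAt (fun t : ℝ => deriv σ (h n j + t * κ n j))
        (deriv (deriv σ) (h n j) * κ n j) 0 := by
      have := (hσ'd (h n j + (0:ℝ) * κ n j)).hasDerivAt.comp 0 hin
      rwa [hin0] at this
    have hv : HasDerivAt (fun t : ℝ => ω (inr j) + t * u (inr j)) (u (inr j)) 0 := by
      simpa using (hasDerivAt_mul_const (u (inr j))).const_add (ω (inr j))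
    have t1 : HasDerivAt (fun t : ℝ => u (inr j) * σ (h n j + t * κ n j))
        (u (inr j) * (deriv σ (h n j) * κ n j)) 0 := hσc.const_mul _
    have t2 : HasDerivAt
        (fun t : ℝ => (ω (inr j) + t * u (inr j)) * (deriv σ (h n j + t * κ n j) * κ n j))
        (u (inr j) * (deriv σ (h n j + (0:ℝ) * κ n j) * κ n j)
          + (ω (inr j) + (0:ℝ) * u (inr j)) * (deriv (deriv σ) (h n j) * κ n j * κ n j)) 0 := by
      have hmul : HasDerivAt (fun t : ℝ => deriv σ (h n j + t * κ n j) * κ n j)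
          (deriv (deriv σ) (h n j) * κ n j * κ n j) 0 := hσ'c.mul_const _
      exact hv.mul hmul
    have := t1.fun_add t2
    rw [hin0] at this
    convert this using 1
    ring
  -- explicit derivative of R along the line
  have happ : ∀ (t : ℝ) (i), (ω + t • u) i = ω i + t * u i := by
    intro t i
    simp [PiLp.add_apply, PiLp.smul_apply, smul_eq_mul]
  have hlineval : ∀ (n : Fin N) (t : ℝ), f (x n) (ω + t • u) = F n t := by
    intro n t
    rw [hf, hF]
    simp only
    congr 1
    refine Finset.sum_congr rfl fun j _ => ?_
    rw [happ]
    congr 1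
    have hks : ∀ s : Fin M₁, ∑ k, (ω + t • u) (inl (s,k)) * x n k = a n s + t * b n s := by
      intro s
      rw [ha, hb]
      simp only
      rw [Finset.mul_sum, ← Finset.sum_add_distrib]
      refine Finset.sum_congr rfl fun k _ => ?_
      rw [happ]
      ring
    have hsum : ∑ s, A2 j s * ∑ k, (ω + t • u) (inl (s,k)) * x n k
        = (∑ s, A2 j s * a n s) + t * ∑ s, A2 j s * b n s := by
      rw [Finset.mul_sum, ← Finset.sum_add_distrib]
      refine Finset.sum_congr rfl fun s _ => ?_
      rw [hks s]
      ring
    rw [hsum, hh, hκ]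
    simp only
    ring
  have hφeq : (fun t : ℝ => R (ω + t • u))
      = fun t => (1 / N : ℝ) * ∑ n, g (F n t) (y n) := by
    funext t
    rw [hR]
    simp only
    congr 1
    exact Finset.sum_congr rfl fun n _ => by rw [hlineval n t]
  set G : ℝ → ℝ := fun t =>
    (1 / N : ℝ) * ∑ n, deriv (fun a => g a (y n)) (F n t) * F1 n t with hG
  have hφ' : ∀ t : ℝ, HasDerivAt (fun t : ℝ => R (ω + t • u)) (G t) t := by
    intro t
    rw [hφeq, hG]
    simp only
    refine HasDerivAt.const_mul _ ?_
    refine HasDerivAt.fun_sum ?_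
    intro n _
    exact ((hGbd n (F n t)).hasDerivAt).comp t (hHF n t)
  set S : ℝ := (1 / N : ℝ) * ∑ n,
      (deriv (deriv (fun a => g a (y n))) (F n 0) * F1 n 0 * F1 n 0
        + deriv (fun a => g a (y n)) (F n 0) * F2 n) with hS
  have hGd : HasDerivAt G S 0 := by
    rw [hG, hS]
    refine HasDerivAt.const_mul _ ?_
    refine HasDerivAt.fun_sum ?_
    intro n _
    have hchain : HasDerivAt (fun t : ℝ => deriv (fun a => g a (y n)) (F n t))
        (deriv (deriv (fun a => g a (y n))) (F n 0) * F1 n 0) 0 :=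
      ((hdgd n (F n 0)).hasDerivAt).comp 0 (hHF n 0)
    exact hchain.mul (hHF1 n)
  -- smoothness of R
  have hR2 : ContDiff ℝ 2 R := by
    have hfC : ∀ n : Fin N,
        ContDiff ℝ 2 (fun ωp : EuclideanSpace ℝ (Fin M₁ × Fin d ⊕ Fin M₂) => f (x n) ωp) := by
      intro n
      have hfe : (fun ωp : EuclideanSpace ℝ (Fin M₁ × Fin d ⊕ Fin M₂) => f (x n) ωp)
          = fun ωp => (M₂ : ℝ) ^ (-c) * ∑ i : Fin M₂, ωp (inr i) *
              σ ((M₁ : ℝ) ^ (-c) * ∑ s : Fin M₁, A2 i s *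
                ∑ k : Fin d, ωp (inl (s, k)) * x n k) := funext fun ωp => hf _ _
      rw [hfe]
      refine contDiff_const.mul (ContDiff.sum fun j _ => ContDiff.mul ?_ (hσ.comp ?_))
      · exact (EuclideanSpace.proj (𝕜 := ℝ) (inr j : Fin M₁ × Fin d ⊕ Fin M₂)).contDiff
      · refine contDiff_const.mul (ContDiff.sum fun s _ => contDiff_const.mul
          (ContDiff.sum fun k _ => ContDiff.mul ?_ contDiff_const))
        exact (EuclideanSpace.proj (𝕜 := ℝ) (inl (s, k) : Fin M₁ × Fin d ⊕ Fin M₂)).contDiff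
    rw [hR]
    exact contDiff_const.mul (ContDiff.sum fun n _ =>
      hg.comp ((hfC n).prodMk contDiff_const))
  -- identify the quadratic form with S
  have hheq : (fun t : ℝ => fderiv ℝ R (ω + t • u) u) = G := by
    funext t
    have hRd : Differentiable ℝ R := hR2.differentiable (by norm_num)
    have hlin : HasDerivAt (fun s : ℝ => ω + s • u) u t := by
      simpa using ((hasDerivAt_id t).smul_const u).const_add ω
    have h1 : HasDerivAt (fun s : ℝ => R (ω + s • u)) (fderiv ℝ R (ω + t • u) u) t :=
      (hRd (ω + t • u)).hasFDerivAt.comp_hasDerivAt t hlin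
    exact h1.unique (hφ' t)
  have hQS : ⟪u, fderiv ℝ (gradient R) ω u⟫ = S := by
    have hhl := hessian_line R hR2 ω u
    rw [hheq] at hhl
    exact hhl.unique hGd
  rw [hQS]
  -- basic positivity facts
  have hNpos : (0:ℝ) < N := by exact_mod_cast hN
  have hM2pos : (0:ℝ) < M₂ := by exact_mod_cast (NeZero.pos M₂)
  have hM1pos : (0:ℝ) < M₁ := by exact_mod_cast lt_of_lt_of_le Nat.zero_lt_one hM₁
  have hLg0 : 0 ≤ Lg := le_trans (abs_nonneg _) (hLg 0 0)
  have hLσ'0 : 0 ≤ Lσ' := le_trans (abs_nonneg _) (hLσ' 0)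
  have hLσ''0 : 0 ≤ Lσ'' := le_trans (abs_nonneg _) (hLσ'' 0)
  set V : ℝ := ⨆ i : Fin M₂, |ω (inr i)| with hVdef
  have hVle : ∀ j : Fin M₂, |ω (inr j)| ≤ V := by
    intro j
    rw [hVdef]
    exact le_ciSup (f := fun i : Fin M₂ => |ω (inr i)|)
      (Set.Finite.bddAbove (Set.finite_range _)) j
  have hV0 : 0 ≤ V := le_trans (abs_nonneg _) (hVle ⟨0, NeZero.pos M₂⟩)
  have hNS0 : 0 ≤ ‖Sighat‖ := norm_nonneg _
  have hNA0 : 0 ≤ ‖SigA2‖ := norm_nonneg _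
  set UA : ℝ := ∑ s : Fin M₁, ∑ k : Fin d, (u (inl (s,k)))^2 with hUAdef
  set UV : ℝ := ∑ j : Fin M₂, (u (inr j))^2 with hUVdef
  have hUA0 : 0 ≤ UA := Finset.sum_nonneg fun s _ => Finset.sum_nonneg fun k _ => sq_nonneg _
  have hUV0 : 0 ≤ UV := Finset.sum_nonneg fun j _ => sq_nonneg _
  have hnormu : ‖u‖^2 = UA + UV := by
    have h1 : ‖u‖^2 = ∑ i, (u i)^2 := by
      rw [EuclideanSpace.norm_eq, Real.sq_sqrt (Finset.sum_nonneg fun i _ => by positivity)]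
      exact Finset.sum_congr rfl fun i _ => by rw [Real.norm_eq_abs, sq_abs]
    rw [h1, Fintype.sum_sum_type, hUAdef, hUVdef]
    congr 1
    rw [Fintype.sum_prod_type]
  have hW0 : 0 ≤ ‖u‖^2 := sq_nonneg _
  -- norm of vectors in EuclideanSpace as sum of squares
  have hnormsq : ∀ {ι : Type} [Fintype ι] (w : EuclideanSpace ℝ ι), ‖w‖^2 = ∑ i, (w i)^2 := by
    intro ι _ w
    rw [EuclideanSpace.norm_eq, Real.sq_sqrt (Finset.sum_nonneg fun i _ => by positivity)]
    exact Finset.sum_congr rfl fun i _ => by rw [Real.norm_eq_abs, sq_abs]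
  -- quadratic form bound for SigA2
  have hKA : ∀ w : EuclideanSpace ℝ (Fin M₁),
      ∑ j : Fin M₂, (∑ s, A2 j s * w s)^2 ≤ (M₂:ℝ) * (‖SigA2‖ * ∑ s, (w s)^2) := by
    intro w
    have hinner : ⟪w, SigA2 w⟫ = (1/M₂:ℝ) * ∑ j : Fin M₂, (∑ s, A2 j s * w s)^2 := by
      have h1 : ⟪w, SigA2 w⟫ = ∑ s, w s * SigA2 w s := by
        rw [PiLp.inner_apply]
        exact Finset.sum_congr rfl fun s _ => by simp [RCLike.inner_apply, mul_comm]
      rw [h1]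
      have h2 : ∀ s, w s * SigA2 w s
          = (1/M₂:ℝ) * ∑ j : Fin M₂, (w s * A2 j s) * (∑ s', A2 j s' * w s') := by
        intro s
        rw [hSigA2, Finset.mul_sum, Finset.mul_sum, Finset.mul_sum]
        exact Finset.sum_congr rfl fun j _ => by ring
      rw [Finset.sum_congr rfl fun s _ => h2 s, ← Finset.mul_sum, Finset.sum_comm]
      congr 1
      refine Finset.sum_congr rfl fun j _ => ?_
      rw [← Finset.sum_mul, sq]
      congr 1
      exact Finset.sum_congr rfl fun s _ => by ring
    have hb1 : ⟪w, SigA2 w⟫ ≤ ‖SigA2‖ * ∑ s, (w s)^2 := by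
      calc ⟪w, SigA2 w⟫ ≤ ‖w‖ * ‖SigA2 w‖ := real_inner_le_norm _ _
        _ ≤ ‖w‖ * (‖SigA2‖ * ‖w‖) := by
            exact mul_le_mul_of_nonneg_left (SigA2.le_opNorm w) (norm_nonneg _)
        _ = ‖SigA2‖ * ‖w‖^2 := by ring
        _ = ‖SigA2‖ * ∑ s, (w s)^2 := by rw [hnormsq w]
    have := mul_le_mul_of_nonneg_left hb1 (le_of_lt hM2pos)
    rw [hinner] at this
    calc ∑ j : Fin M₂, (∑ s, A2 j s * w s)^2
        = (M₂:ℝ) * ((1/M₂:ℝ) * ∑ j : Fin M₂, (∑ s, A2 j s * w s)^2) := by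
          field_simp
      _ ≤ (M₂:ℝ) * (‖SigA2‖ * ∑ s, (w s)^2) := this
  -- quadratic form bound for Sighat
  have hSq : ∀ w : EuclideanSpace ℝ (Fin d),
      (1/N:ℝ) * ∑ n, (∑ k, x n k * w k)^2 ≤ ‖Sighat‖ * ∑ k, (w k)^2 := by
    intro w
    have hxw : ∀ n, ⟪x n, w⟫ = ∑ k, x n k * w k := by
      intro n
      rw [PiLp.inner_apply]
      exact Finset.sum_congr rfl fun k _ => by simp [RCLike.inner_apply, mul_comm]
    have hinner : ⟪w, Sighat w⟫ = (1/N:ℝ) * ∑ n, (∑ k, x n k * w k)^2 := by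
      have h1 : ⟪w, Sighat w⟫ = ∑ k, w k * Sighat w k := by
        rw [PiLp.inner_apply]
        exact Finset.sum_congr rfl fun k _ => by simp [RCLike.inner_apply, mul_comm]
      rw [h1]
      have h2 : ∀ k, w k * Sighat w k
          = (1/N:ℝ) * ∑ n, (w k * x n k) * (∑ k', x n k' * w k') := by
        intro k
        rw [hSig, Finset.mul_sum, Finset.mul_sum, Finset.mul_sum]
        refine Finset.sum_congr rfl fun n _ => ?_
        rw [hxw n]
        ring
      rw [Finset.sum_congr rfl fun k _ => h2 k, ← Finset.mul_sum, Finset.sum_comm]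
      congr 1
      refine Finset.sum_congr rfl fun n _ => ?_
      rw [← Finset.sum_mul, sq]
      congr 1
      exact Finset.sum_congr rfl fun k _ => by ring
    have hb1 : ⟪w, Sighat w⟫ ≤ ‖Sighat‖ * ∑ k, (w k)^2 := by
      calc ⟪w, Sighat w⟫ ≤ ‖w‖ * ‖Sighat w‖ := real_inner_le_norm _ _
        _ ≤ ‖w‖ * (‖Sighat‖ * ‖w‖) := by
            exact mul_le_mul_of_nonneg_left (Sighat.le_opNorm w) (norm_nonneg _)
        _ = ‖Sighat‖ * ‖w‖^2 := by ring
        _ = ‖Sighat‖ * ∑ k, (w k)^2 := by rw [hnormsq w]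
    rw [← hinner]
    exact hb1
  -- average of Kb
  set Kb : Fin N → ℝ := fun n => ∑ s, (b n s)^2 with hKbdef
  have hKb0 : ∀ n, 0 ≤ Kb n := fun n => Finset.sum_nonneg fun s _ => sq_nonneg _
  have hKbavg : (1/N:ℝ) * ∑ n, Kb n ≤ ‖Sighat‖ * UA := by
    have hswap : (1/N:ℝ) * ∑ n, Kb n = ∑ s : Fin M₁, ((1/N:ℝ) * ∑ n, (b n s)^2) := by
      rw [← Finset.mul_sum, hKbdef]
      congr 1
      exact Finset.sum_comm
    rw [hswap, hUAdef, Finset.mul_sum]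
    refine Finset.sum_le_sum fun s _ => ?_
    have h2 := hSq (WithLp.toLp 2 (fun k => u (inl (s,k))))
    calc (1/N:ℝ) * ∑ n, (b n s)^2
        = (1/N:ℝ) * ∑ n, (∑ k, x n k * u (inl (s,k)))^2 := by
          congr 1
          refine Finset.sum_congr rfl fun n _ => ?_
          rw [hb]
          simp only
          congr 1
          exact Finset.sum_congr rfl fun k _ => mul_comm _ _
      _ ≤ ‖Sighat‖ * ∑ k, (u (inl (s,k)))^2 := h2
  -- per-sample quadratic bound on κ
  set CA : ℝ := ((M₁:ℝ)^(-c))^2 * ((M₂:ℝ) * ‖SigA2‖) with hCAdef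
  have hCA0 : 0 ≤ CA := by
    rw [hCAdef]
    positivity
  set K : Fin N → ℝ := fun n => ∑ j : Fin M₂, (κ n j)^2 with hKdef
  have hK0 : ∀ n, 0 ≤ K n := fun n => Finset.sum_nonneg fun j _ => sq_nonneg _
  have hKn : ∀ n, K n ≤ CA * Kb n := by
    intro n
    have h1 : K n = ((M₁:ℝ)^(-c))^2 * ∑ j : Fin M₂, (∑ s, A2 j s * b n s)^2 := by
      rw [hKdef, Finset.mul_sum]
      refine Finset.sum_congr rfl fun j _ => ?_
      rw [hκ]
      ring
    have h2 := hKA (WithLp.toLp 2 (fun s => b n s))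
    rw [h1, hCAdef, hKbdef]
    calc ((M₁:ℝ)^(-c))^2 * ∑ j : Fin M₂, (∑ s, A2 j s * b n s)^2
        ≤ ((M₁:ℝ)^(-c))^2 * ((M₂:ℝ) * (‖SigA2‖ * ∑ s, (b n s)^2)) := by
          refine mul_le_mul_of_nonneg_left h2 (sq_nonneg _)
      _ = ((M₁:ℝ)^(-c))^2 * ((M₂:ℝ) * ‖SigA2‖) * ∑ s, (b n s)^2 := by ring
  -- Cauchy-Schwarz for the cross term
  have hCS : ∀ n, ∑ j : Fin M₂, |u (inr j)| * |κ n j|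
      ≤ Real.sqrt UV * Real.sqrt (K n) := by
    intro n
    have h1 := Finset.sum_mul_sq_le_sq_mul_sq Finset.univ
      (fun j : Fin M₂ => |u (inr j)|) (fun j => |κ n j|)
    have h2 : ∑ j : Fin M₂, |u (inr j)|^2 = UV := by
      rw [hUVdef]; exact Finset.sum_congr rfl fun j _ => sq_abs _
    have h3 : ∑ j : Fin M₂, |κ n j|^2 = K n := by
      rw [hKdef]; exact Finset.sum_congr rfl fun j _ => sq_abs _
    rw [h2, h3] at h1
    have h4 : (0:ℝ) ≤ ∑ j : Fin M₂, |u (inr j)| * |κ n j| :=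
      Finset.sum_nonneg fun j _ => mul_nonneg (abs_nonneg _) (abs_nonneg _)
    calc ∑ j : Fin M₂, |u (inr j)| * |κ n j|
        = Real.sqrt ((∑ j : Fin M₂, |u (inr j)| * |κ n j|)^2) := by
          rw [Real.sqrt_sq h4]
      _ ≤ Real.sqrt (UV * K n) := Real.sqrt_le_sqrt h1
      _ = Real.sqrt UV * Real.sqrt (K n) := Real.sqrt_mul hUV0 _
  -- bound on |F2 n|
  have hF2b : ∀ n, |F2 n| ≤ (M₂:ℝ)^(-c) *
      (2 * Lσ' * (Real.sqrt UV * Real.sqrt (K n)) + Lσ'' * V * K n) := by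
    intro n
    rw [hF2]
    simp only
    rw [abs_mul, abs_of_pos (Real.rpow_pos_of_pos hM2pos _)]
    refine mul_le_mul_of_nonneg_left ?_
      (le_of_lt (Real.rpow_pos_of_pos hM2pos _))
    calc |∑ j : Fin M₂, (2 * (u (inr j) * (deriv σ (h n j) * κ n j))
          + ω (inr j) * (deriv (deriv σ) (h n j) * κ n j * κ n j))|
        ≤ ∑ j : Fin M₂, |2 * (u (inr j) * (deriv σ (h n j) * κ n j))
          + ω (inr j) * (deriv (deriv σ) (h n j) * κ n j * κ n j)| :=
          Finset.abs_sum_le_sum_abs _ _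
      _ ≤ ∑ j : Fin M₂, (2 * Lσ' * (|u (inr j)| * |κ n j|) + Lσ'' * V * (κ n j)^2) := by
          refine Finset.sum_le_sum fun j _ => ?_
          refine (abs_add_le _ _).trans ?_
          have e1 : |2 * (u (inr j) * (deriv σ (h n j) * κ n j))|
              = 2 * (|u (inr j)| * (|deriv σ (h n j)| * |κ n j|)) := by
            rw [abs_mul, abs_mul, abs_mul]
            norm_num
          have e2 : |ω (inr j) * (deriv (deriv σ) (h n j) * κ n j * κ n j)|
              = |ω (inr j)| * (|deriv (deriv σ) (h n j)| * (|κ n j| * |κ n j|)) := by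
            rw [abs_mul, abs_mul, abs_mul]
            ring
          rw [e1, e2]
          have b1 : 2 * (|u (inr j)| * (|deriv σ (h n j)| * |κ n j|))
              ≤ 2 * Lσ' * (|u (inr j)| * |κ n j|) := by
            have := mul_le_mul_of_nonneg_right (hLσ' (h n j)) (abs_nonneg (κ n j))
            have h5 : |u (inr j)| * (|deriv σ (h n j)| * |κ n j|)
                ≤ |u (inr j)| * (Lσ' * |κ n j|) :=
              mul_le_mul_of_nonneg_left this (abs_nonneg _)
            nlinarith [abs_nonneg (u (inr j)), abs_nonneg (κ n j)]
          have b2 : |ω (inr j)| * (|deriv (deriv σ) (h n j)| * (|κ n j| * |κ n j|))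
              ≤ Lσ'' * V * (κ n j)^2 := by
            have hkk : |κ n j| * |κ n j| = (κ n j)^2 := by
              rw [abs_mul_abs_self, sq]
            rw [hkk]
            have h6 : |deriv (deriv σ) (h n j)| * (κ n j)^2 ≤ Lσ'' * (κ n j)^2 :=
              mul_le_mul_of_nonneg_right (hLσ'' _) (sq_nonneg _)
            calc |ω (inr j)| * (|deriv (deriv σ) (h n j)| * (κ n j)^2)
                ≤ |ω (inr j)| * (Lσ'' * (κ n j)^2) :=
                  mul_le_mul_of_nonneg_left h6 (abs_nonneg _)
              _ ≤ V * (Lσ'' * (κ n j)^2) := by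
                  refine mul_le_mul_of_nonneg_right (hVle j) ?_
                  positivity
              _ = Lσ'' * V * (κ n j)^2 := by ring
          linarith
      _ = 2 * Lσ' * (∑ j : Fin M₂, |u (inr j)| * |κ n j|) + Lσ'' * V * K n := by
          rw [Finset.sum_add_distrib, hKdef, ← Finset.mul_sum, ← Finset.mul_sum]
      _ ≤ 2 * Lσ' * (Real.sqrt UV * Real.sqrt (K n)) + Lσ'' * V * K n := by
          refine add_le_add ?_ le_rfl
          refine mul_le_mul_of_nonneg_left (hCS n) ?_
          positivity
  -- step 1 : S ≥ -(1/N) ∑ Lg |F2 n|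
  have hmono : ∀ n : Fin N, Monotone (deriv (fun a => g a (y n))) := fun n =>
    monotoneOn_univ.mp ((hgconv (y n)).monotoneOn_deriv (fun z _ => (hGbd n) z))
  have hper : ∀ n : Fin N, -(Lg * |F2 n|) ≤
      deriv (deriv fun a => g a (y n)) (F n 0) * F1 n 0 * F1 n 0
        + deriv (fun a => g a (y n)) (F n 0) * F2 n := by
    intro n
    have hdd : 0 ≤ deriv (deriv fun a => g a (y n)) (F n 0) :=
      mono_deriv_nonneg' (hmono n) ((hdgd n) (F n 0))
    have hP : 0 ≤ deriv (deriv fun a => g a (y n)) (F n 0) * F1 n 0 * F1 n 0 := by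
      rw [mul_assoc]
      exact mul_nonneg hdd (mul_self_nonneg _)
    have hQ : -(Lg * |F2 n|) ≤ deriv (fun a => g a (y n)) (F n 0) * F2 n := by
      have h1 : |deriv (fun a => g a (y n)) (F n 0) * F2 n| ≤ Lg * |F2 n| := by
        rw [abs_mul]
        exact mul_le_mul_of_nonneg_right (hLg _ _) (abs_nonneg _)
      have h2 := neg_abs_le (deriv (fun a => g a (y n)) (F n 0) * F2 n)
      linarith
    linarith
  have hS1 : -((1/N:ℝ) * ∑ n, Lg * |F2 n|) ≤ S := by
    rw [hS]
    have h1 := Finset.sum_le_sum (fun n (_ : n ∈ Finset.univ) => hper n)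
    calc -((1/N:ℝ) * ∑ n, Lg * |F2 n|) = (1/N:ℝ) * ∑ n, -(Lg * |F2 n|) := by
          rw [Finset.sum_neg_distrib]
          ring
      _ ≤ (1/N:ℝ) * ∑ n, (deriv (deriv fun a => g a (y n)) (F n 0) * F1 n 0 * F1 n 0
            + deriv (fun a => g a (y n)) (F n 0) * F2 n) := by
          refine mul_le_mul_of_nonneg_left h1 ?_
          positivity
  -- step 2 : average the bound on |F2|
  have hsqrtK : (1/N:ℝ) * ∑ n, Real.sqrt (K n)
      ≤ Real.sqrt CA * Real.sqrt (‖Sighat‖ * UA) := by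
    have h1 : ∀ n : Fin N, Real.sqrt (K n) ≤ Real.sqrt CA * Real.sqrt (Kb n) := by
      intro n
      calc Real.sqrt (K n) ≤ Real.sqrt (CA * Kb n) := Real.sqrt_le_sqrt (hKn n)
        _ = Real.sqrt CA * Real.sqrt (Kb n) := Real.sqrt_mul hCA0 _
    have h2 : (1/N:ℝ) * ∑ n, Real.sqrt (Kb n) ≤ Real.sqrt ((1/N:ℝ) * ∑ n, Kb n) := by
      have hj := Finset.sum_mul_sq_le_sq_mul_sq Finset.univ
        (fun _ : Fin N => (1:ℝ)) (fun n => Real.sqrt (Kb n))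
      have hj2 : (∑ n, Real.sqrt (Kb n))^2 ≤ (N:ℝ) * ∑ n, Kb n := by
        have e1 : ∑ n : Fin N, (1:ℝ) * Real.sqrt (Kb n) = ∑ n, Real.sqrt (Kb n) := by
          simp
        have e2 : ∑ n : Fin N, ((1:ℝ))^2 = (N:ℝ) := by simp
        have e3 : ∑ n : Fin N, (Real.sqrt (Kb n))^2 = ∑ n, Kb n :=
          Finset.sum_congr rfl fun n _ => Real.sq_sqrt (hKb0 n)
        rw [e1, e2, e3] at hj
        exact hj
      have hs0 : (0:ℝ) ≤ (1/N:ℝ) * ∑ n, Real.sqrt (Kb n) := by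
        have : (0:ℝ) ≤ ∑ n, Real.sqrt (Kb n) :=
          Finset.sum_nonneg fun n _ => Real.sqrt_nonneg _
        positivity
      rw [Real.le_sqrt hs0 (by positivity)]
      have : ((1/N:ℝ) * ∑ n, Real.sqrt (Kb n))^2
          = (1/N:ℝ)^2 * (∑ n, Real.sqrt (Kb n))^2 := by ring
      rw [this]
      calc (1/N:ℝ)^2 * (∑ n, Real.sqrt (Kb n))^2
          ≤ (1/N:ℝ)^2 * ((N:ℝ) * ∑ n, Kb n) := by
            refine mul_le_mul_of_nonneg_left hj2 (sq_nonneg _)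
        _ = (1/N:ℝ) * ∑ n, Kb n := by
            field_simp
    calc (1/N:ℝ) * ∑ n, Real.sqrt (K n)
        ≤ (1/N:ℝ) * ∑ n, (Real.sqrt CA * Real.sqrt (Kb n)) := by
          refine mul_le_mul_of_nonneg_left (Finset.sum_le_sum fun n _ => h1 n) ?_
          positivity
      _ = Real.sqrt CA * ((1/N:ℝ) * ∑ n, Real.sqrt (Kb n)) := by
          rw [← Finset.mul_sum]
          ring
      _ ≤ Real.sqrt CA * Real.sqrt ((1/N:ℝ) * ∑ n, Kb n) := by
          refine mul_le_mul_of_nonneg_left h2 (Real.sqrt_nonneg _)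
      _ ≤ Real.sqrt CA * Real.sqrt (‖Sighat‖ * UA) := by
          refine mul_le_mul_of_nonneg_left (Real.sqrt_le_sqrt hKbavg) (Real.sqrt_nonneg _)
  have hKavg : (1/N:ℝ) * ∑ n, K n ≤ CA * (‖Sighat‖ * UA) := by
    calc (1/N:ℝ) * ∑ n, K n ≤ (1/N:ℝ) * ∑ n, (CA * Kb n) := by
          refine mul_le_mul_of_nonneg_left (Finset.sum_le_sum fun n _ => hKn n) ?_
          positivity
      _ = CA * ((1/N:ℝ) * ∑ n, Kb n) := by
          rw [← Finset.mul_sum]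
          ring
      _ ≤ CA * (‖Sighat‖ * UA) := mul_le_mul_of_nonneg_left hKbavg hCA0
  have havg : (1/N:ℝ) * ∑ n, Lg * |F2 n| ≤ Lg * ((M₂:ℝ)^(-c) *
      (2 * Lσ' * Real.sqrt UV * (Real.sqrt CA * Real.sqrt (‖Sighat‖ * UA))
        + Lσ'' * V * (CA * (‖Sighat‖ * UA)))) := by
    have e0 : ∑ n : Fin N, ((M₂:ℝ)^(-c) * (2 * Lσ' * (Real.sqrt UV * Real.sqrt (K n))
          + Lσ'' * V * K n))
        = ((M₂:ℝ)^(-c) * (2 * Lσ' * Real.sqrt UV)) * ∑ n, Real.sqrt (K n)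
          + ((M₂:ℝ)^(-c) * (Lσ'' * V)) * ∑ n, K n := by
      rw [Finset.mul_sum, Finset.mul_sum, ← Finset.sum_add_distrib]
      exact Finset.sum_congr rfl fun n _ => by ring
    have h1 : (1/N:ℝ) * ∑ n, |F2 n| ≤ (1/N:ℝ) * ∑ n, ((M₂:ℝ)^(-c) *
        (2 * Lσ' * (Real.sqrt UV * Real.sqrt (K n)) + Lσ'' * V * K n)) := by
      refine mul_le_mul_of_nonneg_left (Finset.sum_le_sum fun n _ => hF2b n) ?_
      positivity
    have h2 : (1/N:ℝ) * ∑ n, ((M₂:ℝ)^(-c) *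
        (2 * Lσ' * (Real.sqrt UV * Real.sqrt (K n)) + Lσ'' * V * K n))
        = ((M₂:ℝ)^(-c) * (2 * Lσ' * Real.sqrt UV)) * ((1/N:ℝ) * ∑ n, Real.sqrt (K n))
          + ((M₂:ℝ)^(-c) * (Lσ'' * V)) * ((1/N:ℝ) * ∑ n, K n) := by
      rw [e0]
      ring
    have h3 : ((M₂:ℝ)^(-c) * (2 * Lσ' * Real.sqrt UV)) * ((1/N:ℝ) * ∑ n, Real.sqrt (K n))
        ≤ ((M₂:ℝ)^(-c) * (2 * Lσ' * Real.sqrt UV)) * (Real.sqrt CA * Real.sqrt (‖Sighat‖ * UA)) := by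
      refine mul_le_mul_of_nonneg_left hsqrtK ?_
      positivity
    have h4 : ((M₂:ℝ)^(-c) * (Lσ'' * V)) * ((1/N:ℝ) * ∑ n, K n)
        ≤ ((M₂:ℝ)^(-c) * (Lσ'' * V)) * (CA * (‖Sighat‖ * UA)) := by
      refine mul_le_mul_of_nonneg_left hKavg ?_
      positivity
    have h5 : (1/N:ℝ) * ∑ n, Lg * |F2 n| = Lg * ((1/N:ℝ) * ∑ n, |F2 n|) := by
      rw [← Finset.mul_sum]
      ring
    rw [h5]
    have h6 : (1/N:ℝ) * ∑ n, |F2 n|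
        ≤ ((M₂:ℝ)^(-c) * (2 * Lσ' * Real.sqrt UV)) * (Real.sqrt CA * Real.sqrt (‖Sighat‖ * UA))
          + ((M₂:ℝ)^(-c) * (Lσ'' * V)) * (CA * (‖Sighat‖ * UA)) := by
      rw [h2] at h1
      linarith
    calc Lg * ((1/N:ℝ) * ∑ n, |F2 n|)
        ≤ Lg * (((M₂:ℝ)^(-c) * (2 * Lσ' * Real.sqrt UV)) * (Real.sqrt CA * Real.sqrt (‖Sighat‖ * UA))
            + ((M₂:ℝ)^(-c) * (Lσ'' * V)) * (CA * (‖Sighat‖ * UA))) :=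
          mul_le_mul_of_nonneg_left h6 hLg0
      _ = Lg * ((M₂:ℝ)^(-c) *
          (2 * Lσ' * Real.sqrt UV * (Real.sqrt CA * Real.sqrt (‖Sighat‖ * UA))
            + Lσ'' * V * (CA * (‖Sighat‖ * UA)))) := by ring
  -- rpow algebra
  have em2 : (M₂:ℝ)^(-c) * (M₂:ℝ) = ((M₂:ℝ)^(c-1))⁻¹ := by
    calc (M₂:ℝ)^(-c) * (M₂:ℝ) = (M₂:ℝ)^(-c) * (M₂:ℝ)^(1:ℝ) := by rw [Real.rpow_one]
      _ = (M₂:ℝ)^(-c+1) := (Real.rpow_add hM2pos _ _).symm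
      _ = (M₂:ℝ)^(-(c-1)) := by ring_nf
      _ = ((M₂:ℝ)^(c-1))⁻¹ := Real.rpow_neg hM2pos.le _
  have em1 : ((M₁:ℝ)^(-c))^2 = ((M₁:ℝ)^(2*c))⁻¹ := by
    calc ((M₁:ℝ)^(-c))^2 = (M₁:ℝ)^(-c) * (M₁:ℝ)^(-c) := sq _
      _ = (M₁:ℝ)^(-c + -c) := (Real.rpow_add hM1pos _ _).symm
      _ = (M₁:ℝ)^(-(2*c)) := by ring_nf
      _ = ((M₁:ℝ)^(2*c))⁻¹ := Real.rpow_neg hM1pos.le _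
  have em2h : (M₂:ℝ)^(-c) * Real.sqrt (M₂:ℝ) = ((M₂:ℝ)^(c-1/2))⁻¹ := by
    calc (M₂:ℝ)^(-c) * Real.sqrt (M₂:ℝ) = (M₂:ℝ)^(-c) * (M₂:ℝ)^(1/2:ℝ) := by
          rw [Real.sqrt_eq_rpow]
      _ = (M₂:ℝ)^(-c+1/2) := (Real.rpow_add hM2pos _ _).symm
      _ = (M₂:ℝ)^(-(c-1/2)) := by ring_nf
      _ = ((M₂:ℝ)^(c-1/2))⁻¹ := Real.rpow_neg hM2pos.le _
  have em1c : (M₁:ℝ)^(-c) = ((M₁:ℝ)^c)⁻¹ := Real.rpow_neg hM1pos.le c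
  have hsqrtCA : Real.sqrt CA
      = (M₁:ℝ)^(-c) * (Real.sqrt (M₂:ℝ) * Real.sqrt ‖SigA2‖) := by
    rw [hCAdef, Real.sqrt_mul (sq_nonneg _),
      Real.sqrt_sq (le_of_lt (Real.rpow_pos_of_pos hM1pos _)),
      Real.sqrt_mul hM2pos.le]
  have hUAle : UA ≤ ‖u‖^2 := by
    rw [hnormu]
    linarith
  have hcoef1 : 0 ≤ Lσ'' * Lg * ‖Sighat‖ * ‖SigA2‖ * V / ((M₁:ℝ)^(2*c) * (M₂:ℝ)^(c-1)) := by
    have h1 : (0:ℝ) < (M₁:ℝ)^(2*c) := Real.rpow_pos_of_pos hM1pos _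
    have h2 : (0:ℝ) < (M₂:ℝ)^(c-1) := Real.rpow_pos_of_pos hM2pos _
    positivity
  have hcoef2 : 0 ≤ 2 * Lg * Lσ' * Real.sqrt (‖Sighat‖ * ‖SigA2‖)
      / ((M₂:ℝ)^(c-1/2) * (M₁:ℝ)^c) := by
    have h1 : (0:ℝ) < (M₂:ℝ)^(c-1/2) := Real.rpow_pos_of_pos hM2pos _
    have h2 : (0:ℝ) < (M₁:ℝ)^c := Real.rpow_pos_of_pos hM1pos _
    positivity
  have hT1 : Lg * ((M₂:ℝ)^(-c) * (Lσ'' * V * (CA * (‖Sighat‖ * UA))))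
      ≤ Lσ'' * Lg * ‖Sighat‖ * ‖SigA2‖ * V / ((M₁:ℝ)^(2*c) * (M₂:ℝ)^(c-1)) * ‖u‖^2 := by
    have heq : Lg * ((M₂:ℝ)^(-c) * (Lσ'' * V * (CA * (‖Sighat‖ * UA))))
        = (Lσ'' * Lg * ‖Sighat‖ * ‖SigA2‖ * V
            / ((M₁:ℝ)^(2*c) * (M₂:ℝ)^(c-1))) * UA := by
      rw [hCAdef, div_eq_mul_inv, mul_inv, ← em1, ← em2]
      ring
    rw [heq]
    exact mul_le_mul_of_nonneg_left hUAle hcoef1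
  have hT2 : Lg * ((M₂:ℝ)^(-c) * (2 * Lσ' * Real.sqrt UV
        * (Real.sqrt CA * Real.sqrt (‖Sighat‖ * UA))))
      ≤ 2 * Lg * Lσ' * Real.sqrt (‖Sighat‖ * ‖SigA2‖)
          / ((M₂:ℝ)^(c-1/2) * (M₁:ℝ)^c) * ‖u‖^2 := by
    have hspl : Real.sqrt (‖Sighat‖ * UA) = Real.sqrt ‖Sighat‖ * Real.sqrt UA :=
      Real.sqrt_mul hNS0 _
    have hgm : Real.sqrt UV * Real.sqrt UA ≤ ‖u‖^2 / 2 := by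
      have h1 := sq_nonneg (Real.sqrt UV - Real.sqrt UA)
      rw [sub_sq] at h1
      rw [Real.sq_sqrt hUV0, Real.sq_sqrt hUA0] at h1
      rw [hnormu]
      linarith
    set C : ℝ := 2 * Lg * Lσ' * Real.sqrt (‖Sighat‖ * ‖SigA2‖)
        / ((M₂:ℝ)^(c-1/2) * (M₁:ℝ)^c) with hCdef
    have heq : Lg * ((M₂:ℝ)^(-c) * (2 * Lσ' * Real.sqrt UV
          * (Real.sqrt CA * Real.sqrt (‖Sighat‖ * UA))))
        = C * (Real.sqrt UV * Real.sqrt UA) := by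
      rw [hspl, hsqrtCA, hCdef, Real.sqrt_mul hNS0, div_eq_mul_inv, mul_inv,
        ← em2h, ← em1c]
      ring
    rw [heq]
    calc C * (Real.sqrt UV * Real.sqrt UA) ≤ C * (‖u‖^2 / 2) :=
          mul_le_mul_of_nonneg_left hgm hcoef2
      _ ≤ C * ‖u‖^2 := by
          refine mul_le_mul_of_nonneg_left ?_ hcoef2
          linarith
  -- combine
  have hfinal : Lg * ((M₂:ℝ)^(-c) *
      (2 * Lσ' * Real.sqrt UV * (Real.sqrt CA * Real.sqrt (‖Sighat‖ * UA))
        + Lσ'' * V * (CA * (‖Sighat‖ * UA))))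
      ≤ (Lσ'' * Lg * ‖Sighat‖ * ‖SigA2‖ * V / ((M₁:ℝ)^(2*c) * (M₂:ℝ)^(c-1))
        + 2 * Lg * Lσ' * Real.sqrt (‖Sighat‖ * ‖SigA2‖)
            / ((M₂:ℝ)^(c-1/2) * (M₁:ℝ)^c)) * ‖u‖^2 := by
    have hexp : Lg * ((M₂:ℝ)^(-c) *
        (2 * Lσ' * Real.sqrt UV * (Real.sqrt CA * Real.sqrt (‖Sighat‖ * UA))
          + Lσ'' * V * (CA * (‖Sighat‖ * UA))))
        = Lg * ((M₂:ℝ)^(-c) * (2 * Lσ' * Real.sqrt UV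
            * (Real.sqrt CA * Real.sqrt (‖Sighat‖ * UA))))
          + Lg * ((M₂:ℝ)^(-c) * (Lσ'' * V * (CA * (‖Sighat‖ * UA)))) := by ring
    rw [hexp]
    refine le_trans (add_le_add hT2 hT1) (le_of_eq ?_)
    ring
  have hcomb := le_trans havg hfinal
  rw [ge_iff_le, neg_mul]
  exact le_trans (neg_le_neg hcomb) hS1
end
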